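/- arXiv:2411.18284 — 3 statements merged into one kernel-verified Lean document; each statement's English description precedes it below -/
import Mathlib

section
/- Let V be a 1-varifold on ℝ² with finite weight ‖V‖(ℝ²) < ∞ and bounded first variation ‖δV‖(ℝ²) < ∞. Then the density-ratio supremum satisfies 𝔇(‖V‖) ≤ ‖δV‖(ℝ²), where 𝔇(‖V‖) := sup{ ‖V‖(B_r(x))/r : x ∈ ℝ², r > 0 }. -/
open MeasureTheory Metric Filter
open scoped ENNReal RealInnerProductSpace BigOperators

noncomputable section

/-- Points of the plane. -/
abbrev E2 := EuclideanSpace ℝ (Fin 2)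

/-- 2×2 real matrices; elements of G(2,1) are identified with rank-one orthogonal
projection matrices. -/
abbrev Mat2 := Fin 2 → Fin 2 → ℝ

/-- `S` is the orthogonal projection matrix onto a 1-dimensional subspace of ℝ²:
idempotent, symmetric, of trace one. -/
def IsProj1 (S : Mat2) : Prop :=
  (∀ i j, (∑ k : Fin 2, S i k * S k j) = S i j) ∧ (∀ i j, S i j = S j i) ∧
    (∑ i : Fin 2, S i i) = 1

/-- The weight measure ‖V‖ of a varifold `V`. -/
def VarWeight (V : Measure (E2 × Mat2)) : Measure E2 := V.map Prod.fst

/-- `g` belongs to C¹_c(ℝ²;ℝ²). -/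
def C1c (g : E2 → E2) : Prop := ContDiff ℝ 1 g ∧ HasCompactSupport g

/-- The first variation δV(g) = ∫ ∇g(x)·S dV(x,S). -/
def firstVariation (V : Measure (E2 × Mat2)) (g : E2 → E2) : ℝ :=
  ∫ p, (∑ i : Fin 2, ∑ j : Fin 2,
    fderiv ℝ g p.1 (EuclideanSpace.single j (1 : ℝ)) i * p.2 i j) ∂V

/-- The set of values δV(g) over C¹_c vector fields with |g| ≤ 1. -/
def fvSet (V : Measure (E2 × Mat2)) : Set ℝ :=
  {r | ∃ g : E2 → E2, C1c g ∧ (∀ x, ‖g x‖ ≤ 1) ∧ r = firstVariation V g}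

/-- The total first-variation mass ‖δV‖(ℝ²). -/
def deltaNorm (V : Measure (E2 × Mat2)) : ℝ := sSup (fvSet V)

/-- The set of density ratios μ(B_r(x))/r. -/
def ratioSet (μ : Measure E2) : Set ℝ :=
  {q | ∃ (x : E2) (r : ℝ), 0 < r ∧ q = (μ (ball x r)).toReal / r}

/-- The density-ratio supremum 𝔇(μ) = sup_{B_r(x)} μ(B_r(x))/r. -/
def Dsup (μ : Measure E2) : ℝ := sSup (ratioSet μ)

namespace S0
open Real Topology

/-- cutoff: 1 for t ≤ 1, 0 for t ≥ 2 -/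
def chi (t : ℝ) : ℝ := Real.smoothTransition (2 - t)

lemma chi_contDiff : ContDiff ℝ 1 chi :=
  Real.smoothTransition.contDiff.comp ((contDiff_const.sub contDiff_id) : ContDiff ℝ (1:ℕ∞) fun t : ℝ => 2 - t)

lemma chi_one {t : ℝ} (h : t ≤ 1) : chi t = 1 :=
  Real.smoothTransition.one_of_one_le (by linarith)

lemma chi_zero {t : ℝ} (h : 2 ≤ t) : chi t = 0 :=
  Real.smoothTransition.zero_of_nonpos (by linarith)

lemma chi_nonneg (t : ℝ) : 0 ≤ chi t := Real.smoothTransition.nonneg _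
lemma chi_le_one (t : ℝ) : chi t ≤ 1 := Real.smoothTransition.le_one _

lemma chi_deriv_zero_lt {t : ℝ} (h : t < 1) : deriv chi t = 0 := by
  have : chi =ᶠ[nhds t] fun _ => 1 := by
    filter_upwards [Iio_mem_nhds h] with s hs
    exact chi_one (le_of_lt hs)
  rw [this.deriv_eq]; exact deriv_const _ _

lemma chi_deriv_zero_gt {t : ℝ} (h : 2 < t) : deriv chi t = 0 := by
  have : chi =ᶠ[nhds t] fun _ => 0 := by
    filter_upwards [Ioi_mem_nhds h] with s hs
    exact chi_zero (le_of_lt hs)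
  rw [this.deriv_eq]; exact deriv_const _ _

lemma chi_diff (t : ℝ) : DifferentiableAt ℝ chi t :=
  (chi_contDiff.differentiable one_ne_zero).differentiableAt

lemma chi_hasDeriv (t : ℝ) : HasDerivAt chi (deriv chi t) t := (chi_diff t).hasDerivAt

lemma chi_deriv_cont : Continuous (deriv chi) := by
  have h : ContDiff ℝ (1:ℕ∞) chi := chi_contDiff
  exact h.continuous_deriv le_rfl

lemma exists_chi_bound : ∃ C : ℝ, 0 ≤ C ∧ ∀ t, |deriv chi t| ≤ C := by
  have hsupp : HasCompactSupport (deriv chi) := by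
    have : Function.support (deriv chi) ⊆ Set.Icc 1 2 := by
      intro t ht
      by_contra hmem
      simp only [Set.mem_Icc, not_and_or, not_le] at hmem
      rcases hmem with h | h
      · exact ht (chi_deriv_zero_lt h)
      · exact ht (chi_deriv_zero_gt h)
    exact HasCompactSupport.intro isCompact_Icc fun t ht =>
      Function.notMem_support.mp fun hs => ht (this hs)
  obtain ⟨C, hC⟩ := chi_deriv_cont.bounded_above_of_compact_support hsupp
  exact ⟨C, le_trans (abs_nonneg _) (by simpa using hC 1), fun t => by simpa using hC t⟩


def qe (n : ℕ) : ℝ := -(1/(4*(n:ℝ)))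
def base (ρ : ℝ) (n : ℕ) (u : ℝ) : ℝ := ρ^(4*n) + u^(2*n)
def theta (ρ : ℝ) (n : ℕ) (u : ℝ) : ℝ := (base ρ n u) ^ (qe n)
def thetaD (ρ : ℝ) (n : ℕ) (u : ℝ) : ℝ :=
  ((2*n : ℕ) : ℝ) * u ^ (2*n - 1) * (qe n) * (base ρ n u) ^ (qe n - 1)


lemma base_pos {ρ : ℝ} {n : ℕ} (hρ : 0 < ρ) (hn : 1 ≤ n) (u : ℝ) : 0 < base ρ n u := by
  have h1 : 0 < ρ^(4*n) := pow_pos hρ _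
  have h2 : 0 ≤ u^(2*n) := Even.pow_nonneg ⟨n, by ring⟩ u
  unfold base; linarith

lemma qe_neg {n : ℕ} (hn : 1 ≤ n) : qe n < 0 := by
  have h : (0:ℝ) < (n:ℝ) := by exact_mod_cast hn
  have : (0:ℝ) < 1/(4*(n:ℝ)) := by positivity
  unfold qe; linarith

lemma theta_hasDeriv {ρ : ℝ} {n : ℕ} (hρ : 0 < ρ) (hn : 1 ≤ n) (u : ℝ) :
    HasDerivAt (theta ρ n) (thetaD ρ n u) u := by
  have hb : HasDerivAt (base ρ n) (((2*n : ℕ):ℝ) * u ^ (2*n - 1)) u := by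
    exact (hasDerivAt_pow (2*n) u).const_add (ρ^(4*n))
  have := hb.rpow_const (p := qe n) (Or.inl (ne_of_gt (base_pos hρ hn u)))
  show HasDerivAt (fun y => base ρ n y ^ qe n) _ u
  simpa [theta, thetaD, mul_assoc, mul_comm, mul_left_comm] using this

lemma theta_contDiff {ρ : ℝ} {n : ℕ} (hρ : 0 < ρ) (hn : 1 ≤ n) : ContDiff ℝ 1 (theta ρ n) := by
  have hb : ContDiff ℝ 1 (base ρ n) := by
    unfold base; exact contDiff_const.add (contDiff_id.pow _)
  exact hb.rpow_const_of_ne fun u => ne_of_gt (base_pos hρ hn u)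

lemma theta_pos {ρ : ℝ} {n : ℕ} (hρ : 0 < ρ) (hn : 1 ≤ n) (u : ℝ) : 0 < theta ρ n u :=
  rpow_pos_of_pos (base_pos hρ hn u) _

lemma thetaD_nonpos {ρ : ℝ} {n : ℕ} (hρ : 0 < ρ) (hn : 1 ≤ n) {u : ℝ} (hu : 0 ≤ u) :
    thetaD ρ n u ≤ 0 := by
  have h1 : (0:ℝ) ≤ ((2*n:ℕ):ℝ) * u ^ (2*n-1) := by positivity
  have h2 : (0:ℝ) ≤ (base ρ n u) ^ (qe n - 1) := rpow_nonneg (base_pos hρ hn u).le _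
  have h3 := qe_neg hn
  have : thetaD ρ n u = qe n * (((2*n:ℕ):ℝ) * u ^ (2*n-1) * (base ρ n u) ^ (qe n - 1)) := by
    unfold thetaD; ring
  rw [this]
  exact mul_nonpos_of_nonpos_of_nonneg h3.le (mul_nonneg h1 h2)

/-- the key identity θ(u) + 2u θ'(u) = ρ^{4n} base^{qe-1} -/
lemma theta_F {ρ : ℝ} {n : ℕ} (hρ : 0 < ρ) (hn : 1 ≤ n) (u : ℝ) :
    theta ρ n u + 2*u*thetaD ρ n u = ρ^(4*n) * (base ρ n u) ^ (qe n - 1) := by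
  have hb := base_pos hρ hn u
  have h1 : theta ρ n u = base ρ n u * (base ρ n u) ^ (qe n - 1) := by
    rw [theta, Real.rpow_sub hb, Real.rpow_one]; field_simp
  have hq : ((2*n:ℕ):ℝ) * qe n = -(1/2) := by
    have h : ((n:ℝ)) ≠ 0 := by
      have : (0:ℝ) < (n:ℝ) := by exact_mod_cast hn
      linarith
    unfold qe; push_cast; field_simp; ring
  have hpow : u * u ^ (2*n-1) = u ^ (2*n) := by
    rw [← pow_succ']
    congr 1; omega
  have h2 : 2*u*thetaD ρ n u = -(u^(2*n)) * (base ρ n u) ^ (qe n - 1) := by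
    unfold thetaD
    rw [show 2*u*(((2*n:ℕ):ℝ) * u ^ (2*n-1) * qe n * (base ρ n u) ^ (qe n - 1))
      = 2 * (((2*n:ℕ):ℝ) * qe n) * (u * u^(2*n-1)) * (base ρ n u) ^ (qe n - 1) by ring,
      hq, hpow]
    ring
  rw [h1, h2, show base ρ n u * (base ρ n u) ^ (qe n - 1) + -(u^(2*n)) * (base ρ n u) ^ (qe n - 1)
    = (base ρ n u - u^(2*n)) * (base ρ n u) ^ (qe n - 1) by ring,
    show base ρ n u - u^(2*n) = ρ^(4*n) by unfold base; ring]

/-- F ≥ 0 -/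
lemma theta_F_nonneg {ρ : ℝ} {n : ℕ} (hρ : 0 < ρ) (hn : 1 ≤ n) (u : ℝ) :
    0 ≤ theta ρ n u + 2*u*thetaD ρ n u := by
  rw [theta_F hρ hn]
  exact mul_nonneg (pow_nonneg hρ.le _) (rpow_nonneg (base_pos hρ hn u).le _)

/-- lower bound for F on {u ≤ r²}, constant -/
def cval (ρ r : ℝ) (n : ℕ) : ℝ := ρ^(4*n) * (ρ^(4*n) + (r^2)^(2*n)) ^ (qe n - 1)

lemma theta_F_ball {ρ : ℝ} {n : ℕ} (hρ : 0 < ρ) (hn : 1 ≤ n) {r u : ℝ} (hu0 : 0 ≤ u) (hu : u ≤ r^2) :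
    cval ρ r n ≤ theta ρ n u + 2*u*thetaD ρ n u := by
  rw [theta_F hρ hn]
  unfold cval
  apply mul_le_mul_of_nonneg_left _ (pow_nonneg hρ.le _)
  apply Real.rpow_le_rpow_of_nonpos (base_pos hρ hn u)
  · unfold base
    have : u^(2*n) ≤ (r^2)^(2*n) := pow_le_pow_left₀ hu0 hu _
    linarith
  · have := qe_neg hn; linarith

/-- 2u|θ'| ≤ θ for u ≥ 0 -/
lemma theta_D_bound {ρ : ℝ} {n : ℕ} (hρ : 0 < ρ) (hn : 1 ≤ n) {u : ℝ} (hu : 0 ≤ u) :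
    -(theta ρ n u) ≤ 2*u*thetaD ρ n u := by
  have := theta_F_nonneg hρ hn (u := u); linarith

/-- θ(u) ≤ 1/L for u ≥ L², L > 0 -/
lemma theta_small {ρ : ℝ} {n : ℕ} (hρ : 0 < ρ) (hn : 1 ≤ n) {L u : ℝ} (hL : 0 < L) (hu : L^2 ≤ u) :
    theta ρ n u ≤ 1/L := by
  have hu0 : 0 < u := lt_of_lt_of_le (by positivity) hu
  have h1 : theta ρ n u ≤ (u^(2*n) : ℝ) ^ (qe n) := by
    apply Real.rpow_le_rpow_of_nonpos (by positivity)
    · unfold base; nlinarith [pow_pos hρ (4*n)]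
    · exact (qe_neg hn).le
  have h2 : (u^(2*n) : ℝ) ^ (qe n) = u ^ (-(1/2) : ℝ) := by
    rw [← Real.rpow_natCast u (2*n), ← Real.rpow_mul hu0.le]
    congr 1
    have h : ((n:ℝ)) ≠ 0 := by
      have : (0:ℝ) < (n:ℝ) := by exact_mod_cast hn
      linarith
    unfold qe; push_cast; field_simp; ring
  have h3 : u ^ (-(1/2) : ℝ) ≤ (L^2 : ℝ) ^ (-(1/2) : ℝ) := by
    apply Real.rpow_le_rpow_of_nonpos (by positivity) hu (by norm_num)
  have h4 : (L^2 : ℝ) ^ (-(1/2) : ℝ) = 1/L := by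
    rw [← Real.rpow_natCast L 2, ← Real.rpow_mul hL.le]
    norm_num [Real.rpow_neg_one]
  calc theta ρ n u ≤ (u^(2*n) : ℝ) ^ (qe n) := h1
    _ = u ^ (-(1/2):ℝ) := h2
    _ ≤ (L^2:ℝ) ^ (-(1/2):ℝ) := h3
    _ = 1/L := h4

/-- √u θ(u) ≤ 1 in the form t θ(t²) ≤ 1 -/
lemma theta_sqrt_le {ρ : ℝ} {n : ℕ} (hρ : 0 < ρ) (hn : 1 ≤ n) {t : ℝ} (ht : 0 ≤ t) :
    t * theta ρ n (t^2) ≤ 1 := by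
  rcases eq_or_lt_of_le ht with h | h
  · rw [← h]; simp
  · have h1 : theta ρ n (t^2) ≤ ((t^2)^(2*n) : ℝ) ^ (qe n) := by
      apply Real.rpow_le_rpow_of_nonpos (by positivity)
      · unfold base; nlinarith [pow_pos hρ (4*n)]
      · exact (qe_neg hn).le
    have h2 : ((t^2)^(2*n) : ℝ) ^ (qe n) = t ^ (-1 : ℝ) := by
      rw [← pow_mul, ← Real.rpow_natCast t (2*(2*n)), ← Real.rpow_mul h.le]
      congr 1
      have hh : ((n:ℝ)) ≠ 0 := by
        have : (0:ℝ) < (n:ℝ) := by exact_mod_cast hn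
        linarith
      unfold qe; push_cast; field_simp; ring
    have h3 : t * theta ρ n (t^2) ≤ t * t^(-1:ℝ) := by
      apply mul_le_mul_of_nonneg_left (le_trans h1 (le_of_eq h2)) ht
    rw [Real.rpow_neg_one] at h3
    rw [mul_inv_cancel₀ (ne_of_gt h)] at h3
    exact h3



def etaF (ρ : ℝ) (n : ℕ) (L : ℝ) (u : ℝ) : ℝ := theta ρ n u * chi (u / L^2)
def etaD (ρ : ℝ) (n : ℕ) (L : ℝ) (u : ℝ) : ℝ :=
  thetaD ρ n u * chi (u / L^2) + theta ρ n u * (deriv chi (u / L^2) / L^2)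


lemma etaF_hasDeriv {ρ : ℝ} {n : ℕ} {L : ℝ} (hρ : 0 < ρ) (hn : 1 ≤ n) (hL : 0 < L) (u : ℝ) :
    HasDerivAt (etaF ρ n L) (etaD ρ n L u) u := by
  have h1 := theta_hasDeriv hρ hn u
  have h2 : HasDerivAt (fun u : ℝ => chi (u / L^2)) (deriv chi (u/L^2) / L^2) u := by
    have := (chi_hasDeriv (u / L^2)).comp u ((hasDerivAt_id u).div_const (L^2))
    simpa [div_eq_mul_inv, Function.comp_def] using this
  exact h1.mul h2

lemma etaF_contDiff {ρ : ℝ} {n : ℕ} {L : ℝ} (hρ : 0 < ρ) (hn : 1 ≤ n) (hL : 0 < L) :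
    ContDiff ℝ 1 (etaF ρ n L) := by
  apply (theta_contDiff hρ hn).mul
  exact chi_contDiff.comp (contDiff_id.div_const _)

lemma etaF_deriv {ρ : ℝ} {n : ℕ} {L : ℝ} (hρ : 0 < ρ) (hn : 1 ≤ n) (hL : 0 < L) (u : ℝ) :
    deriv (etaF ρ n L) u = etaD ρ n L u := (etaF_hasDeriv hρ hn hL u).deriv

lemma etaF_nonneg {ρ : ℝ} {n : ℕ} {L : ℝ} (hρ : 0 < ρ) (hn : 1 ≤ n) (u : ℝ) : 0 ≤ etaF ρ n L u :=
  mul_nonneg (theta_pos hρ hn u).le (chi_nonneg _)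

lemma etaF_le_theta {ρ : ℝ} {n : ℕ} {L : ℝ} (hρ : 0 < ρ) (hn : 1 ≤ n) (u : ℝ) : etaF ρ n L u ≤ theta ρ n u := by
  have := theta_pos hρ hn u
  have := chi_le_one (u / L^2)
  unfold etaF; nlinarith

lemma etaF_zero {ρ : ℝ} {n : ℕ} {L : ℝ} (hL : 0 < L) {u : ℝ} (hu : 2*L^2 ≤ u) : etaF ρ n L u = 0 := by
  unfold etaF
  rw [chi_zero, mul_zero]
  rw [le_div_iff₀ (by positivity)]; linarith

/-- for u < L², η = θ locally, so deriv = θ' -/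
lemma etaD_inner {ρ : ℝ} {n : ℕ} {L : ℝ} (hρ : 0 < ρ) (hn : 1 ≤ n) (hL : 0 < L) {u : ℝ} (hu : u < L^2) :
    etaD ρ n L u = thetaD ρ n u := by
  have h1 : chi (u / L^2) = 1 := chi_one (by rw [div_le_one (by positivity)]; linarith)
  have h2 : deriv chi (u / L^2) = 0 := chi_deriv_zero_lt (by rw [div_lt_one (by positivity)]; exact hu)
  unfold etaD; rw [h1, h2]; ring

lemma etaD_outer {ρ : ℝ} {n : ℕ} {L : ℝ} (hρ : 0 < ρ) (hn : 1 ≤ n) (hL : 0 < L) {u : ℝ} (hu : 4*L^2 < u) :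
    etaD ρ n L u = 0 := by
  have h1 : chi (u / L^2) = 0 := chi_zero (by rw [le_div_iff₀ (by positivity)]; nlinarith)
  have h2 : deriv chi (u / L^2) = 0 := chi_deriv_zero_gt (by rw [lt_div_iff₀ (by positivity)]; nlinarith)
  unfold etaD; rw [h1, h2]; ring

/-- the lower-bound function -/
def Bfun (ρ : ℝ) (n : ℕ) (L u : ℝ) : ℝ := etaF ρ n L u + 2*u*(min (etaD ρ n L u) 0)

lemma Bfun_ball {ρ : ℝ} {n : ℕ} {L : ℝ} (hρ : 0 < ρ) (hn : 1 ≤ n) (hL : 0 < L) {r u : ℝ}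
    (hu0 : 0 ≤ u) (hur : u ≤ r^2) (hrL : r^2 < L^2) :
    cval ρ r n ≤ Bfun ρ n L u := by
  have huL : u < L^2 := lt_of_le_of_lt hur hrL
  have h1 : etaF ρ n L u = theta ρ n u := by
    unfold etaF
    rw [chi_one (by rw [div_le_one (by positivity)]; linarith), mul_one]
  have h2 : etaD ρ n L u = thetaD ρ n u := etaD_inner hρ hn hL huL
  have h3 : min (thetaD ρ n u) 0 = thetaD ρ n u := min_eq_left (thetaD_nonpos hρ hn hu0)
  unfold Bfun
  rw [h1, h2, h3]
  exact theta_F_ball hρ hn hu0 hur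

lemma Bfun_global {ρ : ℝ} {n : ℕ} {L : ℝ} (hρ : 0 < ρ) (hn : 1 ≤ n) (hL : 0 < L)
    {Cχ : ℝ} (hC0 : 0 ≤ Cχ) (hC : ∀ t, |deriv chi t| ≤ Cχ)
    {u : ℝ} (hu : 0 ≤ u) :
    -((1 + 8*Cχ)/L) ≤ Bfun ρ n L u := by
  have hE : 0 ≤ (1 + 8*Cχ)/L := by positivity
  rcases lt_or_ge u (L^2) with h | h
  · -- inner region: Bfun = θ + 2u θ' = F ≥ 0
    have h1 : etaF ρ n L u = theta ρ n u := by
      unfold etaF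
      rw [chi_one (by rw [div_le_one (by positivity)]; linarith), mul_one]
    have h2 := etaD_inner hρ hn hL h
    have h3 : min (thetaD ρ n u) 0 = thetaD ρ n u := min_eq_left (thetaD_nonpos hρ hn hu)
    unfold Bfun; rw [h1, h2, h3]
    calc -((1 + 8*Cχ)/L) ≤ 0 := by linarith
      _ ≤ _ := theta_F_nonneg hρ hn u
  · rcases le_or_gt u (4*L^2) with h4 | h4
    · -- middle region
      have hθ : theta ρ n u ≤ 1/L := theta_small hρ hn hL h
      have hθ0 := (theta_pos hρ hn u).le
      have hm : -(theta ρ n u * (1 + 8*Cχ)) ≤ 2*u*(min (etaD ρ n L u) 0) := by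
        have hmin : min (etaD ρ n L u) 0 ≤ 0 := min_le_right _ _
        have habs : -(|etaD ρ n L u|) ≤ min (etaD ρ n L u) 0 := by
          rcases le_or_gt (etaD ρ n L u) 0 with hh | hh
          · rw [min_eq_left hh]; exact neg_abs_le _
          · rw [min_eq_right hh.le]; simp [abs_nonneg]
        have hub : |etaD ρ n L u| ≤ |thetaD ρ n u| * 1 + theta ρ n u * (Cχ/L^2) := by
          unfold etaD
          calc |thetaD ρ n u * chi (u / L^2) + theta ρ n u * (deriv chi (u / L^2) / L^2)|
              ≤ |thetaD ρ n u * chi (u / L^2)| + |theta ρ n u * (deriv chi (u / L^2) / L^2)| :=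
                abs_add_le _ _
            _ ≤ |thetaD ρ n u| * 1 + theta ρ n u * (Cχ/L^2) := by
                apply add_le_add
                · rw [abs_mul]
                  apply mul_le_mul_of_nonneg_left _ (abs_nonneg _)
                  rw [abs_of_nonneg (chi_nonneg _)]; exact chi_le_one _
                · rw [abs_mul, abs_of_nonneg hθ0, abs_div, abs_of_nonneg (by positivity : (0:ℝ) ≤ L^2)]
                  apply mul_le_mul_of_nonneg_left _ hθ0
                  exact div_le_div_of_nonneg_right (hC _) (by positivity) |>.trans_eq rfl
        -- 2u|θ'| ≤ θ
        have h2u : 2*u*|thetaD ρ n u| ≤ theta ρ n u := by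
          rw [abs_of_nonpos (thetaD_nonpos hρ hn hu)]
          have hdb := theta_D_bound hρ hn hu
          linarith
        have h2uC : 2*u*(theta ρ n u * (Cχ/L^2)) ≤ theta ρ n u * 8*Cχ := by
          have : u * theta ρ n u * Cχ ≤ 4*L^2 * theta ρ n u * Cχ := by
            apply mul_le_mul_of_nonneg_right _ hC0
            exact mul_le_mul_of_nonneg_right h4 hθ0
          rw [div_eq_mul_inv]
          have hL2 : (0:ℝ) < L^2 := by positivity
          calc 2*u*(theta ρ n u * (Cχ * (L^2)⁻¹)) = 2*(u * theta ρ n u * Cχ) * (L^2)⁻¹ := by ring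
            _ ≤ 2*(4*L^2 * theta ρ n u * Cχ) * (L^2)⁻¹ := by
                apply mul_le_mul_of_nonneg_right _ (by positivity)
                linarith
            _ = theta ρ n u * 8*Cχ := by field_simp; ring
        calc -(theta ρ n u * (1 + 8*Cχ)) = -(theta ρ n u * 1 + theta ρ n u * 8 * Cχ) := by ring
          _ ≤ -(2*u*|etaD ρ n L u|) := by
              have : 2*u*|etaD ρ n L u| ≤ 2*u*(|thetaD ρ n u| * 1 + theta ρ n u * (Cχ/L^2)) :=
                mul_le_mul_of_nonneg_left hub (by linarith)
              nlinarith
          _ ≤ 2*u*(min (etaD ρ n L u) 0) := by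
              have := mul_le_mul_of_nonneg_left habs (by linarith : (0:ℝ) ≤ 2*u)
              nlinarith
      have hfinal : -((1+8*Cχ)/L) ≤ etaF ρ n L u + 2*u*(min (etaD ρ n L u) 0) := by
        have hEF := etaF_nonneg (L := L) hρ hn u
        have hθL : theta ρ n u * (1 + 8*Cχ) ≤ (1+8*Cχ)/L := by
          rw [div_eq_mul_inv, mul_comm (1+8*Cχ)]
          apply mul_le_mul_of_nonneg_right _ (by linarith)
          rw [← one_div]; exact hθ
        linarith
      exact hfinal
    · -- outer region: Bfun = 0
      have h1 : etaF ρ n L u = 0 := etaF_zero hL (by nlinarith)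
      have h2 : etaD ρ n L u = 0 := etaD_outer hρ hn hL h4
      unfold Bfun; rw [h1, h2]; simp; positivity

lemma Bfun_continuous {ρ : ℝ} {n : ℕ} {L : ℝ} (hρ : 0 < ρ) (hn : 1 ≤ n) (hL : 0 < L) :
    Continuous (Bfun ρ n L) := by
  have h1 : Continuous (etaF ρ n L) := (etaF_contDiff hρ hn hL).continuous
  have h2 : Continuous (etaD ρ n L) := by
    have := (etaF_contDiff hρ hn hL).continuous_deriv le_rfl
    have heq : deriv (etaF ρ n L) = etaD ρ n L := funext (etaF_deriv hρ hn hL)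
    rwa [heq] at this
  exact h1.add ((continuous_const.mul continuous_id).mul (h2.min continuous_const))

lemma Bfun_zero_outer {ρ : ℝ} {n : ℕ} {L : ℝ} (hρ : 0 < ρ) (hn : 1 ≤ n) (hL : 0 < L) {u : ℝ} (hu : 4*L^2 < u) :
    Bfun ρ n L u = 0 := by
  unfold Bfun
  rw [etaF_zero hL (by nlinarith), etaD_outer hρ hn hL hu]
  simp


/-! ## The test vector field -/

abbrev E2' := EuclideanSpace ℝ (Fin 2)

def gfun (ρ : ℝ) (n : ℕ) (L : ℝ) (x : E2') (y : E2') : E2' :=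
  etaF ρ n L (‖y - x‖^2) • (y - x)

lemma gfun_contDiff {ρ : ℝ} {n : ℕ} {L : ℝ} (hρ : 0 < ρ) (hn : 1 ≤ n) (hL : 0 < L)
    (x : E2') : ContDiff ℝ 1 (gfun ρ n L x) := by
  apply ContDiff.smul (f := fun y : E2' => etaF ρ n L (‖y - x‖^2)) (g := fun y : E2' => y - x)
  · exact (etaF_contDiff hρ hn hL).comp ((ContDiff.norm_sq ℝ (contDiff_id.sub contDiff_const)))
  · exact contDiff_id.sub contDiff_const

lemma gfun_compactSupport {ρ : ℝ} {n : ℕ} {L : ℝ} (hL : 0 < L) (x : E2') :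
    HasCompactSupport (gfun ρ n L x) := by
  apply HasCompactSupport.intro (K := closedBall x (2*L)) (isCompact_closedBall x (2*L))
  intro y hy
  simp only [mem_closedBall, not_le, dist_eq_norm] at hy
  have h2 : 2*L^2 ≤ ‖y - x‖^2 := by nlinarith [norm_nonneg (y - x)]
  unfold gfun
  rw [etaF_zero hL h2, zero_smul]

lemma gfun_norm_le {ρ : ℝ} {n : ℕ} {L : ℝ} (hρ : 0 < ρ) (hn : 1 ≤ n) (x y : E2') :
    ‖gfun ρ n L x y‖ ≤ 1 := by
  unfold gfun
  rw [norm_smul]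
  have h1 : 0 ≤ etaF ρ n L (‖y - x‖^2) := etaF_nonneg hρ hn _
  rw [Real.norm_of_nonneg h1]
  calc etaF ρ n L (‖y - x‖^2) * ‖y - x‖
      ≤ theta ρ n (‖y - x‖^2) * ‖y - x‖ := by
        apply mul_le_mul_of_nonneg_right (etaF_le_theta hρ hn _) (norm_nonneg _)
    _ ≤ 1 := by
        have := theta_sqrt_le hρ hn (norm_nonneg (y - x)) (ρ := ρ) (n := n)
        nlinarith [this]

lemma gfun_hasFDeriv {ρ : ℝ} {n : ℕ} {L : ℝ} (hρ : 0 < ρ) (hn : 1 ≤ n) (hL : 0 < L)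
    (x y : E2') :
    HasFDerivAt (gfun ρ n L x)
      (etaF ρ n L (‖y - x‖^2) • ContinuousLinearMap.id ℝ E2' +
        (etaD ρ n L (‖y - x‖^2) • (2 • ((innerSL ℝ) (y - x)).comp
          (ContinuousLinearMap.id ℝ E2'))).smulRight (y - x)) y := by
  have hu : HasFDerivAt (fun z : E2' => ‖z - x‖^2)
      (2 • ((innerSL ℝ) (y - x)).comp (ContinuousLinearMap.id ℝ E2')) y :=
    ((hasFDerivAt_id y).sub_const x).norm_sq
  have hc : HasFDerivAt (fun z : E2' => etaF ρ n L (‖z - x‖^2))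
      (etaD ρ n L (‖y - x‖^2) • (2 • ((innerSL ℝ) (y - x)).comp (ContinuousLinearMap.id ℝ E2'))) y :=
    by have := (etaF_hasDeriv hρ hn hL (‖y - x‖^2)).comp_hasFDerivAt y hu; exact this
  have hf : HasFDerivAt (fun z : E2' => z - x) (ContinuousLinearMap.id ℝ E2') y :=
    (hasFDerivAt_id y).sub_const x
  exact hc.smul hf

lemma gfun_fderiv_apply {ρ : ℝ} {n : ℕ} {L : ℝ} (hρ : 0 < ρ) (hn : 1 ≤ n) (hL : 0 < L)
    (x y : E2') (j i : Fin 2) :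
    fderiv ℝ (gfun ρ n L x) y (EuclideanSpace.single j (1:ℝ)) i
      = etaF ρ n L (‖y - x‖^2) * (if i = j then 1 else 0)
        + 2 * etaD ρ n L (‖y - x‖^2) * ((y - x) j) * ((y - x) i) := by
  rw [(gfun_hasFDeriv hρ hn hL x y).fderiv]
  have hinner : (inner ℝ (y - x) (EuclideanSpace.single j (1:ℝ)) : ℝ) = (y - x) j := by
    rw [EuclideanSpace.inner_single_right]; simp
  simp only [ContinuousLinearMap.add_apply, ContinuousLinearMap.smul_apply,
    ContinuousLinearMap.smulRight_apply, ContinuousLinearMap.id_apply,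
    ContinuousLinearMap.coe_smul', Pi.smul_apply, ContinuousLinearMap.coe_comp',
    Function.comp_apply, innerSL_apply_apply, hinner]
  rw [PiLp.add_apply, PiLp.smul_apply, PiLp.smul_apply]
  rw [EuclideanSpace.single_apply]
  simp only [smul_eq_mul]
  by_cases h : i = j
  · simp only [h, if_pos rfl]
    ring
  · rw [if_neg h]
    ring


/-! ## Matrix algebra for rank-one projections -/

lemma coord_le_norm (v : E2') (i : Fin 2) : |v i| ≤ ‖v‖ := by
  have h1 : v i = inner ℝ v (EuclideanSpace.single i (1:ℝ)) := by
    rw [EuclideanSpace.inner_single_right]; simp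
  have h2 := abs_real_inner_le_norm v (EuclideanSpace.single i (1:ℝ))
  rw [EuclideanSpace.norm_single] at h2
  simpa [← h1] using h2

lemma proj_entries {S : Mat2} (hS : IsProj1 S) : ∀ i j, |S i j| ≤ 1 := by
  obtain ⟨hid, hsym, htr⟩ := hS
  have h00 := hid 0 0
  have h11 := hid 1 1
  rw [Fin.sum_univ_two] at h00 h11 htr
  have hs := hsym 0 1
  rw [hs] at h00 h11
  have h1 : |S 0 0| ≤ 1 := by
    rw [abs_le]
    constructor <;> nlinarith [sq_nonneg (S 1 0), sq_nonneg (S 0 0)]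
  have h4 : |S 1 1| ≤ 1 := by
    rw [abs_le]
    constructor <;> nlinarith [sq_nonneg (S 1 0), sq_nonneg (S 1 1)]
  have h3 : |S 1 0| ≤ 1 := by
    rw [abs_le]
    constructor
    · nlinarith [sq_nonneg (S 1 0 + 1), sq_nonneg (S 0 0 - 1/2)]
    · nlinarith [sq_nonneg (S 1 0 - 1), sq_nonneg (S 0 0 - 1/2)]
  have h2 : |S 0 1| ≤ 1 := by rw [hs]; exact h3
  intro i j
  fin_cases i <;> fin_cases j
  · exact h1
  · exact h2
  · exact h3
  · exact h4

/-! ## Pointwise comparison between the lower bound and the integrand -/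

lemma pointwise_key {ρ : ℝ} {n : ℕ} {L : ℝ} (hρ : 0 < ρ) (hn : 1 ≤ n) (hL : 0 < L)
    (x : E2') (p : E2' × Mat2) (hS : IsProj1 p.2) :
    Bfun ρ n L (‖p.1 - x‖^2) ≤
      ∑ i : Fin 2, ∑ j : Fin 2,
        fderiv ℝ (gfun ρ n L x) p.1 (EuclideanSpace.single j (1:ℝ)) i * p.2 i j := by
  obtain ⟨hid, hsym, htr⟩ := hS
  have h00 := hid 0 0
  have h11 := hid 1 1
  rw [Fin.sum_univ_two] at h00 h11 htr
  have hs := hsym 0 1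
  rw [hs] at h00 h11
  set y := p.1
  set S := p.2
  set w := y - x with hw
  set u := ‖w‖^2 with hu
  have hnorm : u = (w 0)^2 + (w 1)^2 := by
    rw [hu, ← real_inner_self_eq_norm_sq, PiLp.inner_apply, Fin.sum_univ_two]
    simp [RCLike.inner_apply]
  have hu0 : 0 ≤ u := by rw [hu]; positivity
  rw [Fin.sum_univ_two]
  rw [Fin.sum_univ_two, Fin.sum_univ_two]
  rw [gfun_fderiv_apply hρ hn hL x y 0 0, gfun_fderiv_apply hρ hn hL x y 1 0,
      gfun_fderiv_apply hρ hn hL x y 0 1, gfun_fderiv_apply hρ hn hL x y 1 1]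
  simp only [if_pos rfl, if_neg (by decide : ¬ ((0:Fin 2) = 1)), if_neg (by decide : ¬ ((1:Fin 2) = 0))]
  set e := etaF ρ n L u
  set d := etaD ρ n L u
  set a := S 0 0
  set b := S 1 0
  set c := S 1 1
  -- quadratic form values
  have hQ0 : 0 ≤ (w 0)*(w 0)*a + 2*b*(w 0)*(w 1) + (w 1)*(w 1)*c := by
    have hQid : (w 0)*(w 0)*a + 2*b*(w 0)*(w 1) + (w 1)*(w 1)*c
        = (a*(w 0) + b*(w 1))^2 + (b*(w 0) + c*(w 1))^2 := by
      linear_combination (-((w 0)^2))*h00 - ((w 1)^2)*h11 - 2*b*(w 0)*(w 1)*htr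
    rw [hQid]; positivity
  have hQu : (w 0)*(w 0)*a + 2*b*(w 0)*(w 1) + (w 1)*(w 1)*c ≤ u := by
    have hQid2 : u - ((w 0)*(w 0)*a + 2*b*(w 0)*(w 1) + (w 1)*(w 1)*c)
        = (b*(w 0) - a*(w 1))^2 + (c*(w 0) - b*(w 1))^2 := by
      rw [hnorm]
      linear_combination (-((w 1)^2))*h00 - ((w 0)^2)*h11
        - ((w 0)^2 + (w 1)^2 - 2*b*(w 0)*(w 1))*htr
    nlinarith [sq_nonneg (b*(w 0) - a*(w 1)), sq_nonneg (c*(w 0) - b*(w 1))]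
  have hetr : e*a + e*c = e := by
    have : e*(a+c) = e*1 := by rw [htr]
    linarith [this]
  rw [← hw, hs]
  norm_num
  unfold Bfun
  rcases le_or_gt d 0 with hd | hd
  · rw [min_eq_left hd]
    have hmul : d*u ≤ d*((w 0)*(w 0)*a + 2*b*(w 0)*(w 1) + (w 1)*(w 1)*c) :=
      mul_le_mul_of_nonpos_left hQu hd
    nlinarith [hmul, hetr]
  · rw [min_eq_right hd.le]
    have hmul : 0 ≤ d*((w 0)*(w 0)*a + 2*b*(w 0)*(w 1) + (w 1)*(w 1)*c) :=
      mul_nonneg hd.le hQ0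
    nlinarith [hmul, hetr]

/-! ## Integrability -/

lemma integrand_continuous {g : E2' → E2'} (hg : ContDiff ℝ 1 g) :
    Continuous (fun p : E2' × Mat2 => ∑ i : Fin 2, ∑ j : Fin 2,
      fderiv ℝ g p.1 (EuclideanSpace.single j (1:ℝ)) i * p.2 i j) := by
  apply continuous_finset_sum
  intro i _
  apply continuous_finset_sum
  intro j _
  apply Continuous.mul
  · have h1 : Continuous fun p : E2' × Mat2 => fderiv ℝ g p.1 :=
      (hg.continuous_fderiv one_ne_zero).comp continuous_fst
    have h2 : Continuous fun p : E2' × Mat2 =>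
        fderiv ℝ g p.1 (EuclideanSpace.single j (1:ℝ)) :=
      (ContinuousLinearMap.apply ℝ E2' (EuclideanSpace.single j (1:ℝ))).continuous.comp h1
    exact (EuclideanSpace.proj i).continuous.comp h2
  · exact (continuous_apply j).comp ((continuous_apply i).comp continuous_snd)

lemma integrand_integrable (V : Measure (E2' × Mat2)) [IsFiniteMeasure V]
    (hproj : ∀ᵐ p ∂V, IsProj1 p.2)
    {g : E2' → E2'} (hg : ContDiff ℝ 1 g) (hsupp : HasCompactSupport g) :
    Integrable (fun p : E2' × Mat2 => ∑ i : Fin 2, ∑ j : Fin 2,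
      fderiv ℝ g p.1 (EuclideanSpace.single j (1:ℝ)) i * p.2 i j) V := by
  obtain ⟨M, hM⟩ := (hg.continuous_fderiv one_ne_zero).bounded_above_of_compact_support
    (hsupp.fderiv ℝ)
  apply MeasureTheory.Integrable.mono' (integrable_const (4*M))
    (integrand_continuous hg).aestronglyMeasurable
  filter_upwards [hproj] with p hp
  have hentry := proj_entries hp
  have hfd : ∀ i j : Fin 2, |fderiv ℝ g p.1 (EuclideanSpace.single j (1:ℝ)) i| ≤ M := by
    intro i j
    calc |fderiv ℝ g p.1 (EuclideanSpace.single j (1:ℝ)) i|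
        ≤ ‖fderiv ℝ g p.1 (EuclideanSpace.single j (1:ℝ))‖ := coord_le_norm _ i
      _ ≤ ‖fderiv ℝ g p.1‖ * ‖EuclideanSpace.single j (1:ℝ)‖ :=
          (fderiv ℝ g p.1).le_opNorm _
      _ = ‖fderiv ℝ g p.1‖ := by rw [EuclideanSpace.norm_single]; simp
      _ ≤ M := hM p.1
  have hterm : ∀ i j : Fin 2,
      |fderiv ℝ g p.1 (EuclideanSpace.single j (1:ℝ)) i * p.2 i j| ≤ M := by
    intro i j
    rw [abs_mul]
    have h0M : (0:ℝ) ≤ M := le_trans (abs_nonneg _) (hfd 0 0)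
    calc |fderiv ℝ g p.1 (EuclideanSpace.single j (1:ℝ)) i| * |p.2 i j|
        ≤ M * 1 := mul_le_mul (hfd i j) (hentry i j) (abs_nonneg _) h0M
      _ = M := mul_one M
  rw [Real.norm_eq_abs]
  calc |∑ i : Fin 2, ∑ j : Fin 2, fderiv ℝ g p.1 (EuclideanSpace.single j (1:ℝ)) i * p.2 i j|
      ≤ ∑ i : Fin 2, ∑ j : Fin 2, |fderiv ℝ g p.1 (EuclideanSpace.single j (1:ℝ)) i * p.2 i j| := by
        refine le_trans (Finset.abs_sum_le_sum_abs _ _) ?_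
        apply Finset.sum_le_sum
        intro i _
        exact Finset.abs_sum_le_sum_abs _ _
    _ ≤ ∑ _i : Fin 2, ∑ _j : Fin 2, M := by
        apply Finset.sum_le_sum; intro i _
        apply Finset.sum_le_sum; intro j _
        exact hterm i j
    _ = 4*M := by simp [Fin.sum_univ_two]; ring

lemma Bcomp_integrable (V : Measure (E2' × Mat2)) [IsFiniteMeasure V]
    {ρ : ℝ} {n : ℕ} {L : ℝ} (hρ : 0 < ρ) (hn : 1 ≤ n) (hL : 0 < L) (x : E2') :
    Integrable (fun p : E2' × Mat2 => Bfun ρ n L (‖p.1 - x‖^2)) V := by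
  have hcont : Continuous (fun y : E2' => Bfun ρ n L (‖y - x‖^2)) :=
    (Bfun_continuous hρ hn hL).comp ((ContDiff.norm_sq ℝ
      ((contDiff_id.sub contDiff_const) : ContDiff ℝ (1:ℕ∞) fun y : E2' => y - x)).continuous)
  have hcsupp : HasCompactSupport (fun y : E2' => Bfun ρ n L (‖y - x‖^2)) := by
    apply HasCompactSupport.intro (K := closedBall x (3*L)) (isCompact_closedBall x (3*L))
    intro y hy
    simp only [mem_closedBall, not_le, dist_eq_norm] at hy
    exact Bfun_zero_outer hρ hn hL (by nlinarith [norm_nonneg (y - x)])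
  obtain ⟨CB, hCB⟩ := hcont.bounded_above_of_compact_support hcsupp
  apply MeasureTheory.Integrable.mono' (integrable_const CB)
    ((hcont.comp continuous_fst).aestronglyMeasurable)
  filter_upwards with p
  exact hCB p.1

/-! ## The master inequality -/

lemma master (V : Measure (E2' × Mat2)) [IsFiniteMeasure V]
    (hproj : ∀ᵐ p ∂V, IsProj1 p.2) (hbfv : BddAbove (fvSet V))
    (x : E2') {r ρ : ℝ} (hr : 0 < r) (hρr : r < ρ) {n : ℕ} (hn : 1 ≤ n)
    {L : ℝ} (hrL : r < L)
    {Cχ : ℝ} (hC0 : 0 ≤ Cχ) (hC : ∀ t, |deriv chi t| ≤ Cχ) :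
    cval ρ r n * (V (Prod.fst ⁻¹' ball x r)).toReal ≤
      deltaNorm V + ((1 + 8*Cχ)/L) * (V Set.univ).toReal := by
  have hρ : 0 < ρ := hr.trans hρr
  have hL : 0 < L := hr.trans hrL
  set g := gfun ρ n L x with hg
  -- g is admissible
  have hgC1 : C1c g := ⟨gfun_contDiff hρ hn hL x, gfun_compactSupport hL x⟩
  have hgnorm : ∀ y, ‖g y‖ ≤ 1 := fun y => gfun_norm_le hρ hn x y
  have hmem : firstVariation V g ∈ fvSet V := ⟨g, hgC1, hgnorm, rfl⟩
  have hfv_le : firstVariation V g ≤ deltaNorm V := le_csSup hbfv hmem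
  -- comparison of integrals
  have hint1 : Integrable (fun p : E2' × Mat2 => ∑ i : Fin 2, ∑ j : Fin 2,
      fderiv ℝ g p.1 (EuclideanSpace.single j (1:ℝ)) i * p.2 i j) V :=
    integrand_integrable V hproj hgC1.1 hgC1.2
  have hint2 : Integrable (fun p : E2' × Mat2 => Bfun ρ n L (‖p.1 - x‖^2)) V :=
    Bcomp_integrable V hρ hn hL x
  have hcomp : (∫ p, Bfun ρ n L (‖p.1 - x‖^2) ∂V) ≤ firstVariation V g := by
    unfold firstVariation
    apply integral_mono_ae hint2 hint1
    filter_upwards [hproj] with p hp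
    exact pointwise_key hρ hn hL x p hp
  -- lower bound for ∫ Bfun
  set A := Prod.fst ⁻¹' (ball x r) with hA
  have hAmeas : MeasurableSet A := measurable_fst measurableSet_ball
  set ee := (1 + 8*Cχ)/L with hee
  have hee0 : 0 ≤ ee := by positivity
  have hlow : ∀ p : E2' × Mat2,
      A.indicator (fun _ => cval ρ r n) p - ee ≤ Bfun ρ n L (‖p.1 - x‖^2) := by
    intro p
    have hu0 : (0:ℝ) ≤ ‖p.1 - x‖^2 := by positivity
    by_cases hpA : p ∈ A
    · rw [Set.indicator_of_mem hpA]
      have hball : ‖p.1 - x‖ < r := by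
        have := hpA
        simp only [hA, Set.mem_preimage, mem_ball, dist_eq_norm] at this
        exact this
      have hur : ‖p.1 - x‖^2 ≤ r^2 := by nlinarith [norm_nonneg (p.1 - x)]
      have := Bfun_ball hρ hn hL hu0 hur (by nlinarith : r^2 < L^2)
      linarith
    · rw [Set.indicator_of_notMem hpA]
      have := Bfun_global hρ hn hL hC0 hC hu0
      rw [← hee] at this
      linarith
  have hintInd : Integrable (fun p : E2' × Mat2 => A.indicator (fun _ => cval ρ r n) p) V :=
    (integrable_const (cval ρ r n)).indicator hAmeas
  have hintl : Integrable (fun p : E2' × Mat2 => A.indicator (fun _ => cval ρ r n) p - ee) V :=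
    hintInd.sub (integrable_const ee)
  have hlow_int : (∫ p, (A.indicator (fun _ => cval ρ r n) p - ee) ∂V)
      ≤ ∫ p, Bfun ρ n L (‖p.1 - x‖^2) ∂V := by
    apply integral_mono_ae hintl hint2
    filter_upwards with p
    exact hlow p
  have hcalc : (∫ p, (A.indicator (fun _ => cval ρ r n) p - ee) ∂V)
      = cval ρ r n * (V A).toReal - ee * (V Set.univ).toReal := by
    rw [integral_sub hintInd (integrable_const ee)]
    rw [integral_indicator_const _ hAmeas, integral_const]
    simp [smul_eq_mul, Measure.real]
    ring
  rw [hcalc] at hlow_int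
  linarith

/-! ## Limits -/

lemma cval_eq {r ρ : ℝ} (hr : 0 < r) (hρr : r < ρ) {n : ℕ} (hn : 1 ≤ n) :
    cval ρ r n = (1/ρ) * (1 + (r^2/ρ^2)^(2*n)) ^ (qe n - 1) := by
  have hρ : 0 < ρ := hr.trans hρr
  have hb : (0:ℝ) < ρ^(4*n) := pow_pos hρ _
  have hs : (0:ℝ) ≤ (r^2/ρ^2)^(2*n) := by positivity
  have hsplit : ρ^(4*n) + (r^2)^(2*n) = ρ^(4*n) * (1 + (r^2/ρ^2)^(2*n)) := by
    have h4 : ((ρ^2:ℝ))^(2*n) = ρ^(4*n) := by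
      rw [← pow_mul]; congr 1; omega
    rw [div_pow, h4]
    field_simp
  unfold cval
  rw [hsplit, Real.mul_rpow hb.le (by linarith)]
  have h1 : ρ^(4*n) * ((ρ^(4*n)) ^ (qe n - 1)) = (ρ^(4*n) : ℝ) ^ (qe n) := by
    rw [show qe n = 1 + (qe n - 1) by ring, Real.rpow_add hb, Real.rpow_one]
    ring_nf
  have h2 : ((ρ^(4*n) : ℝ)) ^ (qe n) = 1/ρ := by
    rw [← Real.rpow_natCast ρ (4*n), ← Real.rpow_mul hρ.le]
    have hne : ((n:ℝ)) ≠ 0 := by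
      have : (0:ℝ) < (n:ℝ) := by exact_mod_cast hn
      linarith
    have : ((4*n : ℕ):ℝ) * qe n = -1 := by
      unfold qe; push_cast; field_simp
    rw [this, Real.rpow_neg_one, one_div]
  calc ρ^(4*n) * ((ρ^(4*n):ℝ) ^ (qe n - 1) * (1 + (r^2/ρ^2)^(2*n)) ^ (qe n - 1))
      = (ρ^(4*n) * (ρ^(4*n):ℝ) ^ (qe n - 1)) * (1 + (r^2/ρ^2)^(2*n)) ^ (qe n - 1) := by ring
    _ = (1/ρ) * (1 + (r^2/ρ^2)^(2*n)) ^ (qe n - 1) := by rw [h1, h2]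

lemma cval_tendsto {r ρ : ℝ} (hr : 0 < r) (hρr : r < ρ) :
    Tendsto (fun n : ℕ => cval ρ r (n+1)) atTop (𝓝 (1/ρ)) := by
  have hρ : 0 < ρ := hr.trans hρr
  have hq1 : r^2/ρ^2 < 1 := by
    rw [div_lt_one (by positivity)]
    nlinarith
  have hq0 : (0:ℝ) ≤ r^2/ρ^2 := by positivity
  -- s n → 0
  have hs : Tendsto (fun n : ℕ => (r^2/ρ^2)^(2*(n+1))) atTop (𝓝 0) := by
    have hgeo := tendsto_pow_atTop_nhds_zero_of_lt_one hq0 hq1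
    have hmono : Tendsto (fun n : ℕ => 2*(n+1)) atTop atTop :=
      Filter.tendsto_atTop_atTop.mpr (fun b => ⟨b, fun a ha => by omega⟩)
    exact hgeo.comp hmono
  -- qe (n+1) - 1 → -1
  have hqe : Tendsto (fun n : ℕ => qe (n+1) - 1) atTop (𝓝 (-1)) := by
    have h2 : Tendsto (fun n : ℕ => ((n:ℝ)+1)) atTop atTop :=
      tendsto_atTop_add_const_right _ 1 tendsto_natCast_atTop_atTop
    have h3 : Tendsto (fun n : ℕ => (4*((n:ℝ)+1))) atTop atTop :=
      h2.const_mul_atTop (by norm_num)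
    have h1 : Tendsto (fun n : ℕ => (4*((n:ℝ)+1))⁻¹) atTop (𝓝 0) :=
      h3.inv_tendsto_atTop
    have : Tendsto (fun n : ℕ => qe (n+1)) atTop (𝓝 0) := by
      have heqq : (fun n : ℕ => qe (n+1)) = fun n : ℕ => -((4*((n:ℝ)+1))⁻¹) := by
        funext n; unfold qe; push_cast; rw [one_div]
      rw [heqq]
      simpa using h1.neg
    simpa using this.sub_const 1
  have hbase : Tendsto (fun n : ℕ => 1 + (r^2/ρ^2)^(2*(n+1))) atTop (𝓝 1) := by
    simpa using (tendsto_const_nhds (x := (1:ℝ))).add hs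
  have hrpow : Tendsto (fun n : ℕ => (1 + (r^2/ρ^2)^(2*(n+1))) ^ (qe (n+1) - 1))
      atTop (𝓝 1) := by
    have := hbase.rpow hqe (Or.inl one_ne_zero)
    simpa [Real.one_rpow] using this
  have heq : ∀ n : ℕ, cval ρ r (n+1) = (1/ρ) * (1 + (r^2/ρ^2)^(2*(n+1))) ^ (qe (n+1) - 1) :=
    fun n => cval_eq hr hρr (by omega)
  simp only [heq]
  simpa using (tendsto_const_nhds (x := (1/ρ : ℝ))).mul hrpow

/-! ## zero is in fvSet -/

lemma zero_mem_fvSet (V : Measure (E2' × Mat2)) : (0:ℝ) ∈ fvSet V := by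
  refine ⟨fun _ => 0, ⟨contDiff_const, ?_⟩, fun y => by simp, ?_⟩
  · exact HasCompactSupport.intro isCompact_empty (fun y _ => rfl)
  · unfold firstVariation
    have : ∀ p : E2' × Mat2, (∑ i : Fin 2, ∑ j : Fin 2,
        fderiv ℝ (fun _ : E2' => (0:E2')) p.1 (EuclideanSpace.single j (1:ℝ)) i * p.2 i j) = 0 := by
      intro p
      simp [fderiv_const]
    rw [show (fun p : E2' × Mat2 => ∑ i : Fin 2, ∑ j : Fin 2,
        fderiv ℝ (fun _ : E2' => (0:E2')) p.1 (EuclideanSpace.single j (1:ℝ)) i * p.2 i j)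
      = fun _ => (0:ℝ) from funext this]
    simp

end S0

set_option maxHeartbeats 1000000 in
open Topology in
/-- for a 1-varifold on ℝ² with finite weight and bounded first
variation, the density-ratio supremum is bounded by ‖δV‖(ℝ²). -/
theorem statement0 (V : Measure (E2 × Mat2)) [IsFiniteMeasure V]
    (hproj : ∀ᵐ p ∂V, IsProj1 p.2)
    (hbfv : BddAbove (fvSet V)) :
    Dsup (VarWeight V) ≤ deltaNorm V ∧
      ∀ (x : E2) (r : ℝ), 0 < r →
        ((VarWeight V) (ball x r)).toReal / r ≤ deltaNorm V := by
  have hD0 : 0 ≤ deltaNorm V := le_csSup hbfv (S0.zero_mem_fvSet V)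
  obtain ⟨Cχ, hC0, hC⟩ := S0.exists_chi_bound
  have key : ∀ (x : E2) (r : ℝ), 0 < r →
      ((VarWeight V) (ball x r)).toReal / r ≤ deltaNorm V := by
    intro x r hr
    have hmap : (VarWeight V) (ball x r) = V (Prod.fst ⁻¹' ball x r) := by
      unfold VarWeight
      exact Measure.map_apply measurable_fst measurableSet_ball
    rw [hmap]
    set W := (V (Prod.fst ⁻¹' ball x r)).toReal with hW
    have hW0 : 0 ≤ W := ENNReal.toReal_nonneg
    set T := (V Set.univ).toReal with hT
    -- for every ρ > r : W ≤ ρ * deltaNorm V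
    have hstep : ∀ ρ : ℝ, r < ρ → W ≤ ρ * deltaNorm V := by
      intro ρ hρr
      have hρ : 0 < ρ := hr.trans hρr
      have hseq : ∀ n : ℕ, S0.cval ρ r (n+1) * W ≤
          deltaNorm V + ((1 + 8*Cχ)/(ρ*(n+1))) * T := by
        intro n
        have hrL : r < ρ*(n+1) := by
          have h1 : (1:ℝ) ≤ (n:ℝ)+1 := by
            have : (0:ℝ) ≤ (n:ℝ) := Nat.cast_nonneg n
            linarith
          nlinarith
        exact S0.master V hproj hbfv x hr hρr (by omega) hrL hC0 hC
      have hlhs : Tendsto (fun n : ℕ => S0.cval ρ r (n+1) * W) atTop (𝓝 ((1/ρ) * W)) :=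
        (S0.cval_tendsto hr hρr).mul_const W
      have hrhs : Tendsto (fun n : ℕ => deltaNorm V + ((1 + 8*Cχ)/(ρ*(n+1))) * T)
          atTop (𝓝 (deltaNorm V + 0 * T)) := by
        apply Tendsto.add tendsto_const_nhds
        apply Tendsto.mul_const T
        have h3 : Tendsto (fun n : ℕ => (ρ*((n:ℝ)+1))) atTop atTop :=
          (tendsto_atTop_add_const_right _ 1 tendsto_natCast_atTop_atTop).const_mul_atTop hρ
        have h4 := h3.inv_tendsto_atTop
        have : (fun n : ℕ => (1 + 8*Cχ)/(ρ*((n:ℝ)+1))) =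
            fun n : ℕ => (1 + 8*Cχ) * (ρ*((n:ℝ)+1))⁻¹ := by
          funext n; rw [div_eq_mul_inv]
        rw [this]
        simpa using (tendsto_const_nhds (x := (1+8*Cχ:ℝ))).mul h4
      have hlim : (1/ρ) * W ≤ deltaNorm V + 0 * T :=
        le_of_tendsto_of_tendsto' hlhs hrhs hseq
      rw [zero_mul, add_zero] at hlim
      calc W = ρ * ((1/ρ) * W) := by field_simp
        _ ≤ ρ * deltaNorm V := by
            apply mul_le_mul_of_nonneg_left hlim hρ.le
    -- conclude W ≤ r * deltaNorm V
    have hfinal : W ≤ r * deltaNorm V := by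
      apply le_of_forall_pos_le_add
      intro ε hε
      have hρr : r < r + ε/(deltaNorm V + 1) := by
        have : 0 < ε/(deltaNorm V + 1) := by positivity
        linarith
      calc W ≤ (r + ε/(deltaNorm V + 1)) * deltaNorm V := hstep _ hρr
        _ = r * deltaNorm V + ε * (deltaNorm V/(deltaNorm V + 1)) := by ring
        _ ≤ r * deltaNorm V + ε := by
            have h1 : deltaNorm V/(deltaNorm V + 1) ≤ 1 := by
              rw [div_le_one (by linarith)]
              linarith
            nlinarith
    rw [div_le_iff₀ hr]
    linarith [hfinal]
  refine ⟨?_, key⟩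
  apply Real.sSup_le _ hD0
  intro q hq
  obtain ⟨x, r, hr, rfl⟩ := hq
  exact key x r hr
end
end

section
/- Let V be a 1-varifold on ℝ² with finite weight ‖V‖(ℝ²) < ∞ and bounded first variation whose total variation measure ‖δV‖ is absolutely continuous with respect to ‖V‖, with generalized curvature h(·,V). Then 𝔇(‖V‖) ≤ (‖V‖(ℝ²))^{1/2} · (∫_{ℝ²} |h(·,V)|² d‖V‖)^{1/2}, where 𝔇(‖V‖) := sup{ ‖V‖(B_r(x))/r : x ∈ ℝ², r > 0 }. -/
open MeasureTheory Metric Filter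
open scoped ENNReal RealInnerProductSpace BigOperators

noncomputable section

namespace S1

/-- far cutoff -/
def eta (R q : ℝ) : ℝ := 1 - Real.smoothTransition (q / R ^ 2 - 1)
def etad (R q : ℝ) : ℝ := -(deriv Real.smoothTransition (q / R ^ 2 - 1) / R ^ 2)

/-- main profile -/
def zeta (σ : ℝ) (k : ℕ) (q : ℝ) : ℝ :=
  (1 + q ^ (2 * k) / σ ^ (4 * k)) ^ (-(1 / (4 * (k : ℝ))))
def zetad (σ : ℝ) (k : ℕ) (q : ℝ) : ℝ :=
  -(1 / (4 * (k : ℝ))) * (1 + q ^ (2 * k) / σ ^ (4 * k)) ^ (-(1 / (4 * (k : ℝ))) - 1) *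
    ((2 * k : ℝ) * q ^ (2 * k - 1) / σ ^ (4 * k))
def Phiz (σ : ℝ) (k : ℕ) (q : ℝ) : ℝ :=
  (1 + q ^ (2 * k) / σ ^ (4 * k)) ^ (-(1 / (4 * (k : ℝ))) - 1)

def psi (σ : ℝ) (k : ℕ) (R q : ℝ) : ℝ := zeta σ k q * eta R q
def psid (σ : ℝ) (k : ℕ) (R q : ℝ) : ℝ := zetad σ k q * eta R q + zeta σ k q * etad R q

variable {σ R q τ : ℝ} {k : ℕ}

lemma even_pow_nonneg (q : ℝ) (k : ℕ) : 0 ≤ q ^ (2 * k) := by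
  rw [mul_comm, pow_mul]; positivity

lemma base_pos (hσ : 0 < σ) (k : ℕ) (q : ℝ) : 0 < 1 + q ^ (2 * k) / σ ^ (4 * k) := by
  have h1 := even_pow_nonneg q k
  have h2 : 0 < σ ^ (4 * k) := by positivity
  positivity

lemma base_one_le (hσ : 0 < σ) (k : ℕ) (q : ℝ) : 1 ≤ 1 + q ^ (2 * k) / σ ^ (4 * k) := by
  have h1 := even_pow_nonneg q k
  have h2 : 0 < σ ^ (4 * k) := by positivity
  nlinarith [div_nonneg h1 h2.le]

lemma zeta_pos (hσ : 0 < σ) : 0 < zeta σ k q :=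
  Real.rpow_pos_of_pos (base_pos hσ k q) _

lemma Phiz_pos (hσ : 0 < σ) : 0 < Phiz σ k q :=
  Real.rpow_pos_of_pos (base_pos hσ k q) _

lemma zeta_le_one (hσ : 0 < σ) : zeta σ k q ≤ 1 :=
  Real.rpow_le_one_of_one_le_of_nonpos (base_one_le hσ k q)
    (neg_nonpos.2 (by positivity))

lemma hasDerivAt_base (hσ : 0 < σ) (k : ℕ) (q : ℝ) :
    HasDerivAt (fun q : ℝ => 1 + q ^ (2 * k) / σ ^ (4 * k))
      ((2 * k : ℝ) * q ^ (2 * k - 1) / σ ^ (4 * k)) q := by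
  have := (hasDerivAt_pow (2 * k) q).div_const (σ ^ (4 * k))
  have h := (hasDerivAt_const q (1 : ℝ)).fun_add this
  exact h.congr_deriv (by push_cast; ring)

lemma hasDerivAt_zeta (hσ : 0 < σ) (q : ℝ) :
    HasDerivAt (zeta σ k) (zetad σ k q) q := by
  have houter := Real.hasDerivAt_rpow_const
    (x := 1 + q ^ (2 * k) / σ ^ (4 * k)) (p := -(1 / (4 * (k : ℝ))))
    (Or.inl (base_pos hσ k q).ne')
  have hc := houter.comp q (hasDerivAt_base hσ k q)
  have : HasDerivAt (zeta σ k)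
      (-(1 / (4 * (k:ℝ))) * (1 + q ^ (2*k) / σ ^ (4*k)) ^ (-(1 / (4 * (k:ℝ))) - 1) *
        ((2 * k : ℝ) * q ^ (2 * k - 1) / σ ^ (4 * k))) q := by
    exact hc
  exact this

lemma zetad_nonpos (hσ : 0 < σ) (hq : 0 ≤ q) : zetad σ k q ≤ 0 := by
  unfold zetad
  have h1 : (0:ℝ) ≤ (1 + q ^ (2 * k) / σ ^ (4 * k)) ^ (-(1 / (4 * (k : ℝ))) - 1) :=
    (Real.rpow_pos_of_pos (base_pos hσ k q) _).le
  have h2 : (0:ℝ) ≤ q ^ (2 * k - 1) := pow_nonneg hq _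
  have h3 : (0:ℝ) < σ ^ (4 * k) := by positivity
  have hc : (0:ℝ) ≤ 1 / (4 * (k:ℝ)) := by positivity
  have h4 : (0:ℝ) ≤ (2 * k : ℝ) * q ^ (2 * k - 1) / σ ^ (4 * k) := by positivity
  nlinarith [mul_nonneg (mul_nonneg hc h1) h4]

lemma zeta_eq_Phiz_mul (hσ : 0 < σ) (q : ℝ) :
    zeta σ k q = Phiz σ k q * (1 + q ^ (2 * k) / σ ^ (4 * k)) := by
  unfold zeta Phiz
  rw [← Real.rpow_add_one (base_pos hσ k q).ne' (-(1/(4*(k:ℝ))) - 1)]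
  congr 1
  ring

lemma two_q_zetad (hσ : 0 < σ) (hk : 1 ≤ k) (q : ℝ) :
    2 * q * zetad σ k q = -(Phiz σ k q * (q ^ (2 * k) / σ ^ (4 * k))) := by
  obtain ⟨m, hm⟩ : ∃ m, 2 * k = m + 1 := ⟨2 * k - 1, by omega⟩
  unfold zetad Phiz
  rw [hm]
  simp only [Nat.add_sub_cancel]
  have hkne : (k:ℝ) ≠ 0 := by
    have : (1:ℝ) ≤ (k:ℝ) := by exact_mod_cast hk
    linarith
  have hmk : (m : ℝ) + 1 = 2 * (k:ℝ) := by exact_mod_cast congrArg (Nat.cast : ℕ → ℝ) hm.symm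
  rw [pow_succ]
  field_simp
  ring

/-! ### smoothTransition derivative bound -/

lemma deriv_st_eq_zero {x : ℝ} (hx : x ∉ Set.Icc (0:ℝ) 1) :
    deriv Real.smoothTransition x = 0 := by
  simp only [Set.mem_Icc, not_and_or, not_le] at hx
  rcases hx with hx | hx
  · have hev : Real.smoothTransition =ᶠ[nhds x] (fun _ => (0:ℝ)) := by
      filter_upwards [Iio_mem_nhds hx] with y hy
      exact Real.smoothTransition.zero_of_nonpos (le_of_lt hy)
    rw [hev.deriv_eq, deriv_const]
  · have hev : Real.smoothTransition =ᶠ[nhds x] (fun _ => (1:ℝ)) := by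
      filter_upwards [Ioi_mem_nhds hx] with y hy
      exact Real.smoothTransition.one_of_one_le (le_of_lt hy)
    rw [hev.deriv_eq, deriv_const]

lemma continuous_deriv_st : Continuous (deriv Real.smoothTransition) :=
  (Real.smoothTransition.contDiff (n := ⊤)).continuous_deriv (by norm_num)

lemma exists_C0 : ∃ C : ℝ, 0 ≤ C ∧ ∀ x, |deriv Real.smoothTransition x| ≤ C := by
  have hcs : HasCompactSupport (deriv Real.smoothTransition) :=
    HasCompactSupport.intro isCompact_Icc fun x hx => deriv_st_eq_zero hx
  obtain ⟨C, hC⟩ := hcs.exists_bound_of_continuous continuous_deriv_st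
  exact ⟨C, le_trans (abs_nonneg _) (hC 0), fun x => hC x⟩

/-! ### eta lemmas -/

lemma hasDerivAt_eta (hR : R ≠ 0) (q : ℝ) : HasDerivAt (eta R) (etad R q) q := by
  have hin : HasDerivAt (fun q : ℝ => q / R ^ 2 - 1) (1 / R ^ 2) q := by
    simpa using ((hasDerivAt_id q).div_const (R ^ 2)).sub_const 1
  have hθ : HasDerivAt Real.smoothTransition
      (deriv Real.smoothTransition (q / R ^ 2 - 1)) (q / R ^ 2 - 1) :=
    (((Real.smoothTransition.contDiff (n := ⊤)).differentiable (by norm_num)) _).hasDerivAt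
  have hcomp := hθ.comp q hin
  have := (hasDerivAt_const q (1:ℝ)).fun_sub hcomp
  exact this.congr_deriv (by unfold etad; ring)

lemma eta_one (hR : 0 < R) (hq : q ≤ R ^ 2) : eta R q = 1 := by
  unfold eta
  rw [Real.smoothTransition.zero_of_nonpos]
  · ring
  · have h2 : (0:ℝ) < R ^ 2 := by positivity
    rw [sub_nonpos, div_le_one h2]
    exact hq
  
lemma eta_zero (hR : 0 < R) (hq : 2 * R ^ 2 ≤ q) : eta R q = 0 := by
  unfold eta
  rw [Real.smoothTransition.one_of_one_le]
  · ring
  · have h2 : (0:ℝ) < R ^ 2 := by positivity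
    rw [le_sub_iff_add_le, le_div_iff₀ h2]
    linarith

lemma eta_nonneg : 0 ≤ eta R q :=
  sub_nonneg.2 (Real.smoothTransition.le_one _)

lemma eta_le_one : eta R q ≤ 1 := by
  unfold eta
  have := Real.smoothTransition.nonneg (q / R ^ 2 - 1)
  linarith

lemma etad_eq_zero_of_lt (hR : 0 < R) (hq : q < R ^ 2 ∨ 2 * R ^ 2 < q) : etad R q = 0 := by
  unfold etad
  have h2 : (0:ℝ) < R ^ 2 := by positivity
  rw [deriv_st_eq_zero, zero_div, neg_zero]
  rcases hq with hq | hq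
  · intro hmem
    have := hmem.1
    rw [sub_nonneg, le_div_iff₀ h2] at this
    linarith
  · intro hmem
    have := hmem.2
    rw [sub_le_iff_le_add, div_le_iff₀ h2] at this
    linarith

lemma etad_abs_le {C : ℝ} (hC : ∀ x, |deriv Real.smoothTransition x| ≤ C) (hR : 0 < R) :
    |etad R q| ≤ C / R ^ 2 := by
  unfold etad
  have h2 : (0:ℝ) < R ^ 2 := by positivity
  rw [abs_neg, abs_div, abs_of_pos h2]
  exact div_le_div_of_nonneg_right (hC _) h2.le


/-! ### psi lemmas and pointwise bounds -/

lemma hasDerivAt_psi (hσ : 0 < σ) (hR : R ≠ 0) (q : ℝ) :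
    HasDerivAt (psi σ k R) (psid σ k R q) q :=
  (hasDerivAt_zeta hσ q).mul (hasDerivAt_eta hR q)

lemma psi_nonneg (hσ : 0 < σ) : 0 ≤ psi σ k R q :=
  mul_nonneg (zeta_pos hσ).le eta_nonneg

lemma psi_le_one (hσ : 0 < σ) : psi σ k R q ≤ 1 :=
  mul_le_one₀ (zeta_le_one hσ) eta_nonneg eta_le_one

/-- L4 : √q · zeta ≤ σ -/
lemma sqrt_mul_zeta_le (hσ : 0 < σ) (hk : 1 ≤ k) (hq : 0 ≤ q) :
    Real.sqrt q * zeta σ k q ≤ σ := by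
  have hb := base_pos hσ k q
  have h1 : (Real.sqrt q * zeta σ k q) ^ (4 * k) ≤ σ ^ (4 * k) := by
    have hsq : (Real.sqrt q) ^ (4 * k) = q ^ (2 * k) := by
      rw [show 4 * k = 2 * (2 * k) by ring, pow_mul, Real.sq_sqrt hq]
    have hz : (zeta σ k q) ^ (4 * k) = (1 + q ^ (2*k)/σ^(4*k))⁻¹ := by
      unfold zeta
      rw [← Real.rpow_natCast ((1 + q ^ (2*k)/σ^(4*k)) ^ (-(1 / (4 * (k:ℝ))))) (4*k),
        ← Real.rpow_mul hb.le]
      have hexp : (-(1 / (4 * (k:ℝ)))) * ((4*k : ℕ) : ℝ) = -1 := by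
        have hk0 : ((k:ℝ)) ≠ 0 := by
          have : (1:ℝ) ≤ (k:ℝ) := by exact_mod_cast hk
          linarith
        push_cast
        field_simp
      rw [hexp, Real.rpow_neg_one]
    rw [mul_pow, hsq, hz, ← div_eq_mul_inv, div_le_iff₀ hb]
    have hσ4 : (0:ℝ) < σ ^ (4*k) := by positivity
    have h2 := even_pow_nonneg q k
    rw [mul_add, mul_one, mul_div_cancel₀ _ hσ4.ne']
    linarith
  exact le_of_pow_le_pow_left₀ (by omega) hσ.le h1

/-- L4' : √q · psi ≤ σ -/
lemma sqrt_mul_psi_le (hσ : 0 < σ) (hk : 1 ≤ k) (hq : 0 ≤ q) :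
    Real.sqrt q * psi σ k R q ≤ σ := by
  unfold psi
  calc Real.sqrt q * (zeta σ k q * eta R q) ≤ Real.sqrt q * (zeta σ k q * 1) := by
        apply mul_le_mul_of_nonneg_left _ (Real.sqrt_nonneg q)
        exact mul_le_mul_of_nonneg_left eta_le_one (zeta_pos hσ).le
    _ = Real.sqrt q * zeta σ k q := by ring
    _ ≤ σ := sqrt_mul_zeta_le hσ hk hq

/-- q·zeta ≤ √q·σ for q ≥ 0 -/
lemma q_mul_zeta_le (hσ : 0 < σ) (hk : 1 ≤ k) (hq : 0 ≤ q) :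
    q * zeta σ k q ≤ Real.sqrt q * σ := by
  have : q * zeta σ k q = Real.sqrt q * (Real.sqrt q * zeta σ k q) := by
    rw [← mul_assoc, Real.mul_self_sqrt hq]
  rw [this]
  exact mul_le_mul_of_nonneg_left (sqrt_mul_zeta_le hσ hk hq) (Real.sqrt_nonneg q)

/-- error bound : |2 q ζ(q) etad(q)| ≤ 2√2 σ C / R -/
lemma err_bound {C : ℝ} (hC0 : 0 ≤ C) (hC : ∀ x, |deriv Real.smoothTransition x| ≤ C)
    (hσ : 0 < σ) (hk : 1 ≤ k) (hR : 0 < R) (hq : 0 ≤ q) :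
    |2 * q * zeta σ k q * etad R q| ≤ 2 * Real.sqrt 2 * σ * C / R := by
  have hζpos := zeta_pos (k := k) (q := q) hσ
  have hrhs : 0 ≤ 2 * Real.sqrt 2 * σ * C / R := by positivity
  by_cases hsup : R ^ 2 ≤ q ∧ q ≤ 2 * R ^ 2
  · have hqz := q_mul_zeta_le hσ hk hq
    have hsq : Real.sqrt q ≤ Real.sqrt 2 * R := by
      rw [show Real.sqrt 2 * R = Real.sqrt (2 * R ^ 2) by
        rw [Real.sqrt_mul (by norm_num), Real.sqrt_sq hR.le]]
      exact Real.sqrt_le_sqrt hsup.2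
    have hed : |etad R q| ≤ C / R ^ 2 := etad_abs_le hC hR
    calc |2 * q * zeta σ k q * etad R q| = 2 * (q * zeta σ k q) * |etad R q| := by
          rw [abs_mul]
          have : 0 ≤ q * zeta σ k q := mul_nonneg hq hζpos.le
          rw [abs_of_nonneg (by linarith : (0:ℝ) ≤ 2 * q * zeta σ k q)]
          ring
      _ ≤ 2 * (Real.sqrt q * σ) * (C / R ^ 2) := by
          apply mul_le_mul _ hed (abs_nonneg _) (by positivity)
          have : 0 ≤ Real.sqrt q * σ := by positivity
          nlinarith
      _ ≤ 2 * (Real.sqrt 2 * R * σ) * (C / R ^ 2) := by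
          have h1 : (0:ℝ) ≤ C / R ^ 2 := by positivity
          have h2 : Real.sqrt q * σ ≤ Real.sqrt 2 * R * σ :=
            mul_le_mul_of_nonneg_right hsq hσ.le
          nlinarith
      _ = 2 * Real.sqrt 2 * σ * C / R := by
          field_simp
  · rw [not_and_or, not_le, not_le] at hsup
    rw [etad_eq_zero_of_lt hR (by tauto), mul_zero, abs_zero]
    exact hrhs

/-- Phiz ≤ 1 -/
lemma Phiz_le_one (hσ : 0 < σ) : Phiz σ k q ≤ 1 :=
  Real.rpow_le_one_of_one_le_of_nonpos (base_one_le hσ k q)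
    (by
      have : (0:ℝ) ≤ 1 / (4 * (k:ℝ)) := by positivity
      linarith)

/-- lower bound for Phiz on [0, τ²] -/
lemma Phiz_ge (hσ : 0 < σ) (hk : 1 ≤ k) (hτ : 0 ≤ τ) (hq0 : 0 ≤ q) (hq : q ≤ τ ^ 2) :
    ((1 + τ ^ (4*k) / σ ^ (4*k)) ^ 2)⁻¹ ≤ Phiz σ k q := by
  set β := τ ^ (4*k) / σ ^ (4*k) with hβ
  have hβ0 : 0 ≤ β := by
    have := even_pow_nonneg τ (2*k)
    rw [show 2*(2*k) = 4*k by ring] at this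
    have hσ4 : (0:ℝ) < σ ^ (4*k) := by positivity
    exact div_nonneg this hσ4.le
  have hu_le : q ^ (2*k) / σ ^ (4*k) ≤ β := by
    have h1 : q ^ (2*k) ≤ (τ^2) ^ (2*k) := pow_le_pow_left₀ hq0 hq (2*k)
    have h2 : (τ^2) ^ (2*k) = τ ^ (4*k) := by
      rw [← pow_mul]
      congr 1
      ring
    have hσ4 : (0:ℝ) < σ ^ (4*k) := by positivity
    rw [hβ]
    exact div_le_div_of_nonneg_right (h2 ▸ h1) hσ4.le |>.trans_eq rfl |> id
  have hbase_le : 1 + q ^ (2*k) / σ ^ (4*k) ≤ 1 + β := by linarith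
  have h1 : (1 + β) ^ (-(1 / (4 * (k:ℝ))) - 1) ≤ Phiz σ k q := by
    unfold Phiz
    apply Real.rpow_le_rpow_of_nonpos (base_pos hσ k q) hbase_le
    have : (0:ℝ) ≤ 1 / (4 * (k:ℝ)) := by positivity
    linarith
  have h2 : (1 + β) ^ ((-2 : ℝ)) ≤ (1 + β) ^ (-(1 / (4 * (k:ℝ))) - 1) := by
    apply Real.rpow_le_rpow_of_exponent_le (by linarith)
    have hk1 : (1:ℝ) ≤ (k:ℝ) := by exact_mod_cast hk
    have : 1 / (4 * (k:ℝ)) ≤ 1 := by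
      rw [div_le_one (by linarith)]
      linarith
    linarith
  have h3 : ((1 + β) ^ 2)⁻¹ = (1 + β) ^ ((-2:ℝ)) := by
    rw [show ((-2:ℝ)) = -((2:ℕ):ℝ) by norm_num, Real.rpow_neg (by linarith),
      Real.rpow_natCast]
  rw [h3]
  exact le_trans h2 h1

/-! ### continuity -/

lemma continuous_base (hσ : 0 < σ) (k : ℕ) :
    Continuous (fun q : ℝ => 1 + q ^ (2*k) / σ ^ (4*k)) :=
  continuous_const.add ((continuous_pow (2*k)).div_const _)

lemma continuous_zeta (hσ : 0 < σ) : Continuous (zeta σ k) :=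
  (continuous_base hσ k).rpow_const fun q => Or.inl (base_pos hσ k q).ne'

lemma continuous_zetad (hσ : 0 < σ) : Continuous (zetad σ k) := by
  unfold zetad
  exact (continuous_const.mul ((continuous_base hσ k).rpow_const
    fun q => Or.inl (base_pos hσ k q).ne')).mul
    ((continuous_const.mul (continuous_pow _)).div_const _)

lemma continuous_eta : Continuous (eta R) :=
  continuous_const.sub (Real.smoothTransition.continuous.comp
    ((continuous_id.div_const _).sub continuous_const))

lemma continuous_etad : Continuous (etad R) :=
  ((continuous_deriv_st.comp ((continuous_id.div_const _).sub continuous_const)).div_const _).neg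

lemma continuous_psi (hσ : 0 < σ) : Continuous (psi σ k R) :=
  (continuous_zeta hσ).mul continuous_eta

lemma continuous_psid (hσ : 0 < σ) : Continuous (psid σ k R) :=
  ((continuous_zetad hσ).mul continuous_eta).add ((continuous_zeta hσ).mul continuous_etad)

/-! ### the vector field g -/

def gfun (σ : ℝ) (k : ℕ) (R : ℝ) (x₀ : E2) (x : E2) : E2 :=
  psi σ k R (‖x - x₀‖ ^ 2) • (x - x₀)

lemma contDiff_psi1 (hσ : 0 < σ) (hR : R ≠ 0) : ContDiff ℝ 1 (psi σ k R) := by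
  apply ContDiff.mul
  · exact ContDiff.rpow_const_of_ne
      (contDiff_const.add ((contDiff_id.pow (2*k)).div_const _))
      (fun q => (base_pos hσ k q).ne')
  · exact contDiff_const.sub ((Real.smoothTransition.contDiff (n := 1)).comp
      ((contDiff_id.div_const _).sub contDiff_const))

lemma contDiff_gfun (hσ : 0 < σ) (hR : R ≠ 0) (x₀ : E2) :
    ContDiff ℝ 1 (gfun σ k R x₀) := by
  apply ContDiff.fun_smul
  · exact (contDiff_psi1 hσ hR).comp ((contDiff_id.sub contDiff_const).norm_sq ℝ)
  · exact contDiff_id.sub contDiff_const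

lemma gfun_eq_zero (hR : 0 < R) (x₀ : E2) {x : E2} (hx : 2 * R ^ 2 ≤ ‖x - x₀‖ ^ 2) :
    gfun σ k R x₀ x = 0 := by
  unfold gfun psi
  rw [eta_zero hR hx, mul_zero, zero_smul]

lemma hasCompactSupport_gfun (hR : 0 < R) (x₀ : E2) :
    HasCompactSupport (gfun σ k R x₀) := by
  apply HasCompactSupport.intro (isCompact_closedBall x₀ (Real.sqrt 2 * R))
  intro x hx
  apply gfun_eq_zero hR
  simp only [mem_closedBall, not_le, dist_eq_norm] at hx
  have h1 : Real.sqrt 2 * R ≤ ‖x - x₀‖ := hx.le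
  have h2 : (Real.sqrt 2 * R) ^ 2 ≤ ‖x - x₀‖ ^ 2 :=
    pow_le_pow_left₀ (by positivity) h1 2
  rw [mul_pow, Real.sq_sqrt (by norm_num : (0:ℝ) ≤ 2)] at h2
  exact h2

lemma C1c_gfun (hσ : 0 < σ) (hR : 0 < R) (x₀ : E2) : C1c (gfun σ k R x₀) :=
  ⟨contDiff_gfun hσ hR.ne' x₀, hasCompactSupport_gfun hR x₀⟩

lemma norm_gfun_le (hσ : 0 < σ) (hk : 1 ≤ k) (x₀ x : E2) :
    ‖gfun σ k R x₀ x‖ ≤ σ := by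
  unfold gfun
  rw [norm_smul, Real.norm_eq_abs,
    abs_of_nonneg (psi_nonneg hσ : (0:ℝ) ≤ psi σ k R (‖x - x₀‖^2))]
  have : ‖x - x₀‖ = Real.sqrt (‖x - x₀‖ ^ 2) := (Real.sqrt_sq (norm_nonneg _)).symm
  calc psi σ k R (‖x - x₀‖^2) * ‖x - x₀‖
      = Real.sqrt (‖x - x₀‖ ^ 2) * psi σ k R (‖x - x₀‖^2) := by rw [← this]; ring
    _ ≤ σ := sqrt_mul_psi_le hσ hk (by positivity)

/-- the full derivative of `gfun` -/
lemma hasFDerivAt_gfun (hσ : 0 < σ) (hR : R ≠ 0) (x₀ x : E2) :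
    HasFDerivAt (gfun σ k R x₀)
      (psi σ k R (‖x - x₀‖ ^ 2) • ContinuousLinearMap.id ℝ E2 +
        ((psid σ k R (‖x - x₀‖ ^ 2)) •
          (2 • (innerSL ℝ (x - x₀)).comp (ContinuousLinearMap.id ℝ E2))).smulRight
            (x - x₀)) x := by
  have hf : HasFDerivAt (fun y : E2 => y - x₀) (ContinuousLinearMap.id ℝ E2) x :=
    (hasFDerivAt_id x).sub_const x₀
  have hn : HasFDerivAt (fun y : E2 => ‖y - x₀‖ ^ 2)
      (2 • (innerSL ℝ (x - x₀)).comp (ContinuousLinearMap.id ℝ E2)) x := hf.norm_sq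
  have hc : HasFDerivAt (fun y : E2 => psi σ k R (‖y - x₀‖ ^ 2))
      ((psid σ k R (‖x - x₀‖ ^ 2)) •
        (2 • (innerSL ℝ (x - x₀)).comp (ContinuousLinearMap.id ℝ E2))) x :=
    (hasDerivAt_psi hσ hR _).comp_hasFDerivAt x hn
  exact hc.smul hf

/-- coordinate formula for the derivative of `gfun` -/
lemma fderiv_gfun_apply (hσ : 0 < σ) (hR : R ≠ 0) (x₀ x : E2) (i j : Fin 2) :
    fderiv ℝ (gfun σ k R x₀) x (EuclideanSpace.single j (1:ℝ)) i =
      psi σ k R (‖x - x₀‖ ^ 2) * (if j = i then 1 else 0) +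
        2 * psid σ k R (‖x - x₀‖ ^ 2) * ((x - x₀) j) * ((x - x₀) i) := by
  rw [(hasFDerivAt_gfun hσ hR x₀ x).fderiv]
  simp only [ContinuousLinearMap.add_apply, ContinuousLinearMap.smul_apply,
    ContinuousLinearMap.id_apply, ContinuousLinearMap.smulRight_apply,
    ContinuousLinearMap.comp_apply, ContinuousLinearMap.coe_smul']
  have hinner : (innerSL ℝ (x - x₀)) (EuclideanSpace.single j (1:ℝ)) = (x - x₀) j := by
    have h0 : (innerSL ℝ (x - x₀)) (EuclideanSpace.single j (1:ℝ)) =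
        ⟪x - x₀, EuclideanSpace.single j (1:ℝ)⟫ := rfl
    rw [h0, EuclideanSpace.inner_single_right]
    simp
  rw [hinner]
  simp only [smul_eq_mul, nsmul_eq_mul, Nat.cast_ofNat]
  have happ : (psi σ k R (‖x - x₀‖ ^ 2) • EuclideanSpace.single j (1:ℝ) +
      (psid σ k R (‖x - x₀‖ ^ 2) * (2 * (x - x₀) j)) • (x - x₀)) i =
      psi σ k R (‖x - x₀‖ ^ 2) * (EuclideanSpace.single j (1:ℝ)) i +
        (psid σ k R (‖x - x₀‖ ^ 2) * (2 * (x - x₀) j)) * (x - x₀) i := by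
    simp [PiLp.add_apply, PiLp.smul_apply, smul_eq_mul]
  rw [happ, EuclideanSpace.single_apply]
  by_cases hij : i = j
  · subst hij
    simp only [if_pos rfl]
    ring
  · rw [if_neg hij, if_neg (fun h => hij h.symm)]
    ring

/-! ### projection matrix facts -/

def quadf (y : E2) (S : Mat2) : ℝ := ∑ i : Fin 2, ∑ j : Fin 2, y i * y j * S i j

lemma norm_sq_coords (y : E2) : ‖y‖ ^ 2 = y 0 * y 0 + y 1 * y 1 := by
  rw [← real_inner_self_eq_norm_sq]
  rw [PiLp.inner_apply]
  simp [Fin.sum_univ_two, RCLike.inner_apply, conj_trivial]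
  ring

lemma quadf_nonneg {S : Mat2} (hS : IsProj1 S) (y : E2) : 0 ≤ quadf y S := by
  obtain ⟨hidem, hsym, htr⟩ := hS
  have h00 := hidem 0 0
  have h11 := hidem 1 1
  have hs := hsym 0 1
  simp only [Fin.sum_univ_two] at h00 h11 htr
  unfold quadf
  simp only [Fin.sum_univ_two]
  rw [hs]
  have key : y 0 * y 0 * S 0 0 + y 0 * y 1 * S 1 0 + (y 1 * y 0 * S 1 0 + y 1 * y 1 * S 1 1) =
      (S 0 0 * y 0 + S 1 0 * y 1)^2 + (S 1 0 * y 0 + S 1 1 * y 1)^2 := by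
    rw [hs] at h00 h11
    linear_combination (-(y 0 * y 0)) * h00 + (-(y 1 * y 1)) * h11 +
      (-(2 * y 0 * y 1 * S 1 0)) * htr
  rw [key]
  positivity

lemma quadf_le {S : Mat2} (hS : IsProj1 S) (y : E2) : quadf y S ≤ ‖y‖ ^ 2 := by
  obtain ⟨hidem, hsym, htr⟩ := hS
  have h00 := hidem 0 0
  have h11 := hidem 1 1
  have hs := hsym 0 1
  simp only [Fin.sum_univ_two] at h00 h11 htr
  rw [norm_sq_coords]
  unfold quadf
  simp only [Fin.sum_univ_two]
  rw [hs]
  have key : y 0 * y 0 + y 1 * y 1 -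
      (y 0 * y 0 * S 0 0 + y 0 * y 1 * S 1 0 + (y 1 * y 0 * S 1 0 + y 1 * y 1 * S 1 1)) =
      (S 1 1 * y 0 - S 1 0 * y 1)^2 + (S 1 0 * y 0 - S 0 0 * y 1)^2 := by
    rw [hs] at h00 h11
    linear_combination (-(y 1 * y 1)) * h00 + (-(y 0 * y 0)) * h11 +
      (-(y 0 * y 0 + y 1 * y 1 - 2 * y 0 * y 1 * S 1 0)) * htr
  nlinarith [key, sq_nonneg (S 1 1 * y 0 - S 1 0 * y 1), sq_nonneg (S 1 0 * y 0 - S 0 0 * y 1)]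

lemma proj_entry_abs_le {S : Mat2} (hS : IsProj1 S) (i j : Fin 2) : |S i j| ≤ 1 := by
  obtain ⟨hidem, hsym, htr⟩ := hS
  have h00 := hidem 0 0
  have h11 := hidem 1 1
  have hs := hsym 0 1
  simp only [Fin.sum_univ_two] at h00 h11 htr
  rw [abs_le]
  fin_cases i <;> fin_cases j <;> simp <;> constructor <;>
    nlinarith [sq_nonneg (S 0 0), sq_nonneg (S 1 1), sq_nonneg (S 0 1), sq_nonneg (S 1 0),
      sq_nonneg (S 0 0 - 1), sq_nonneg (S 1 1 - 1), sq_nonneg (S 0 1 - 1), sq_nonneg (S 0 1 + 1),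
      sq_nonneg (S 1 0 - 1), sq_nonneg (S 1 0 + 1)]

/-! ### the integrand W -/

def Wker (σ : ℝ) (k : ℕ) (R : ℝ) (x₀ : E2) (p : E2 × Mat2) : ℝ :=
  psi σ k R (‖p.1 - x₀‖ ^ 2) * (∑ i : Fin 2, p.2 i i) +
    2 * psid σ k R (‖p.1 - x₀‖ ^ 2) * quadf (p.1 - x₀) p.2

lemma firstVariation_gfun (V : Measure (E2 × Mat2)) (hσ : 0 < σ) (hR : R ≠ 0) (x₀ : E2) :
    firstVariation V (gfun σ k R x₀) = ∫ p, Wker σ k R x₀ p ∂V := by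
  unfold firstVariation
  congr 1
  funext p
  simp only [fderiv_gfun_apply hσ hR x₀ p.1]
  unfold Wker quadf
  simp only [Fin.sum_univ_two]
  norm_num
  ring

lemma continuous_Wker (hσ : 0 < σ) (x₀ : E2) : Continuous (Wker σ k R x₀) := by
  unfold Wker quadf
  have hy : Continuous (fun p : E2 × Mat2 => p.1 - x₀) := continuous_fst.sub continuous_const
  have hq : Continuous (fun p : E2 × Mat2 => ‖p.1 - x₀‖ ^ 2) := (hy.norm).pow 2
  have hS : ∀ i j : Fin 2, Continuous (fun p : E2 × Mat2 => p.2 i j) :=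
    fun i j => (continuous_apply j).comp ((continuous_apply i).comp continuous_snd)
  have hyc : ∀ i : Fin 2, Continuous (fun p : E2 × Mat2 => (p.1 - x₀) i) :=
    fun i => (EuclideanSpace.proj i).continuous.comp hy
  apply Continuous.add
  · exact ((continuous_psi hσ).comp hq).mul (by continuity)
  · apply Continuous.mul
    · exact (continuous_const.mul ((continuous_psid hσ).comp hq))
    · simp only [Fin.sum_univ_two]
      exact ((((hyc 0).mul (hyc 0)).mul (hS 0 0)).add
        (((hyc 0).mul (hyc 1)).mul (hS 0 1))).add
          ((((hyc 1).mul (hyc 0)).mul (hS 1 0)).add (((hyc 1).mul (hyc 1)).mul (hS 1 1)))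

/-- |2 q zetad| ≤ 1 -/
lemma abs_two_q_zetad_le_one (hσ : 0 < σ) (hk : 1 ≤ k) (q : ℝ) :
    |2 * q * zetad σ k q| ≤ 1 := by
  rw [two_q_zetad hσ hk, abs_neg, abs_of_nonneg, ]
  · calc Phiz σ k q * (q ^ (2*k) / σ ^ (4*k))
        ≤ Phiz σ k q * (1 + q ^ (2*k) / σ ^ (4*k)) := by
          apply mul_le_mul_of_nonneg_left _ (Phiz_pos hσ).le
          linarith [base_one_le hσ k q]
      _ = zeta σ k q := (zeta_eq_Phiz_mul hσ q).symm
      _ ≤ 1 := zeta_le_one hσ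
  · have h1 := even_pow_nonneg q k
    have h2 : (0:ℝ) < σ ^ (4*k) := by positivity
    exact mul_nonneg (Phiz_pos hσ).le (by positivity)

lemma continuous_Phiz (hσ : 0 < σ) : Continuous (Phiz σ k) :=
  (continuous_base hσ k).rpow_const fun q => Or.inl (base_pos hσ k q).ne'

lemma Phiz_eta_nonneg (hσ : 0 < σ) : 0 ≤ Phiz σ k q * eta R q :=
  mul_nonneg (Phiz_pos hσ).le eta_nonneg

lemma Phiz_eta_le_one (hσ : 0 < σ) : Phiz σ k q * eta R q ≤ 1 :=
  mul_le_one₀ (Phiz_le_one hσ) eta_nonneg eta_le_one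

/-- sum identity -/
lemma zeta_add_identity (hσ : 0 < σ) (hk : 1 ≤ k) (q : ℝ) :
    zeta σ k q + 2 * q * zetad σ k q = Phiz σ k q := by
  rw [two_q_zetad hσ hk, zeta_eq_Phiz_mul hσ]
  ring

lemma abs_helper {a Q q : ℝ} (h0 : 0 ≤ Q) (h1 : Q ≤ q) : |2 * a * Q| ≤ |2 * q * a| := by
  rw [abs_mul, abs_mul, abs_mul, abs_mul]
  have hq : |Q| ≤ |q| := by
    rw [abs_of_nonneg h0, abs_of_nonneg (h0.trans h1)]; exact h1
  calc |2| * |a| * |Q| ≤ |2| * |a| * |q| :=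
        mul_le_mul_of_nonneg_left hq (by positivity)
    _ = |2| * |q| * |a| := by ring

/-- pointwise lower bound -/
lemma pointwise_lower {C : ℝ} (hσ : 0 < σ) (hk : 1 ≤ k) (hR : 0 < R)
    (hC0 : 0 ≤ C) (hC : ∀ x, |deriv Real.smoothTransition x| ≤ C)
    {q Q : ℝ} (hq0 : 0 ≤ q) (hQ0 : 0 ≤ Q) (hQq : Q ≤ q) :
    Phiz σ k q * eta R q - 2 * Real.sqrt 2 * σ * C / R ≤
      psi σ k R q + 2 * psid σ k R q * Q := by
  have hzd := zetad_nonpos (k := k) hσ hq0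
  have hη0 : (0:ℝ) ≤ eta R q := eta_nonneg
  have ht1 : 2 * q * zetad σ k q * eta R q ≤ 2 * (zetad σ k q * eta R q) * Q := by
    have hfac : zetad σ k q * eta R q ≤ 0 := mul_nonpos_of_nonpos_of_nonneg hzd hη0
    nlinarith
  have ht2 : -(2 * Real.sqrt 2 * σ * C / R) ≤ 2 * (zeta σ k q * etad R q) * Q := by
    have hb := err_bound (σ := σ) (k := k) hC0 hC hσ hk hR hq0
    have habs : |2 * (zeta σ k q * etad R q) * Q| ≤ |2 * q * (zeta σ k q * etad R q)| :=
      abs_helper hQ0 hQq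
    have h2 : |2 * q * (zeta σ k q * etad R q)| = |2 * q * zeta σ k q * etad R q| := by
      rw [show 2 * q * (zeta σ k q * etad R q) = 2 * q * zeta σ k q * etad R q by ring]
    rw [h2] at habs
    have := (abs_le.mp (habs.trans hb)).1
    linarith
  have hid : zeta σ k q * eta R q + 2 * q * zetad σ k q * eta R q =
      Phiz σ k q * eta R q := by
    have hh := zeta_add_identity (σ := σ) hσ hk q
    nlinarith [hh]
  unfold psi psid
  nlinarith [ht1, ht2, hid]

/-- pointwise absolute bound -/
lemma pointwise_abs {C : ℝ} (hσ : 0 < σ) (hk : 1 ≤ k) (hR : 0 < R)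
    (hC0 : 0 ≤ C) (hC : ∀ x, |deriv Real.smoothTransition x| ≤ C)
    {q Q : ℝ} (hq0 : 0 ≤ q) (hQ0 : 0 ≤ Q) (hQq : Q ≤ q) :
    |psi σ k R q + 2 * psid σ k R q * Q| ≤ 2 + 2 * Real.sqrt 2 * σ * C / R := by
  have h1 : |psi σ k R q| ≤ 1 := by
    rw [abs_of_nonneg (psi_nonneg hσ)]; exact psi_le_one hσ
  have hη1 : |eta R q| ≤ 1 := by
    rw [abs_of_nonneg eta_nonneg]; exact eta_le_one
  have ha : |2 * (zetad σ k q * eta R q) * Q| ≤ 1 := by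
    calc |2 * (zetad σ k q * eta R q) * Q|
        ≤ |2 * q * (zetad σ k q * eta R q)| := abs_helper hQ0 hQq
      _ = |2 * q * zetad σ k q| * |eta R q| := by
          rw [show 2 * q * (zetad σ k q * eta R q) = (2 * q * zetad σ k q) * eta R q by ring,
            abs_mul]
      _ ≤ 1 * 1 := mul_le_mul (abs_two_q_zetad_le_one hσ hk q) hη1 (abs_nonneg _)
          zero_le_one
      _ = 1 := by ring
  have hb : |2 * (zeta σ k q * etad R q) * Q| ≤ 2 * Real.sqrt 2 * σ * C / R := by
    calc |2 * (zeta σ k q * etad R q) * Q|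
        ≤ |2 * q * (zeta σ k q * etad R q)| := abs_helper hQ0 hQq
      _ = |2 * q * zeta σ k q * etad R q| := by
          rw [show 2 * q * (zeta σ k q * etad R q) = 2 * q * zeta σ k q * etad R q by ring]
      _ ≤ 2 * Real.sqrt 2 * σ * C / R := err_bound hC0 hC hσ hk hR hq0
  calc |psi σ k R q + 2 * psid σ k R q * Q|
      ≤ |psi σ k R q| + |2 * psid σ k R q * Q| := abs_add_le _ _
    _ ≤ 1 + (1 + 2 * Real.sqrt 2 * σ * C / R) := by
        apply add_le_add h1
        have : 2 * psid σ k R q * Q =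
            2 * (zetad σ k q * eta R q) * Q + 2 * (zeta σ k q * etad R q) * Q := by
          unfold psid; ring
        rw [this]
        exact (abs_add_le _ _).trans (add_le_add ha hb)
    _ = 2 + 2 * Real.sqrt 2 * σ * C / R := by ring

/-- THE MASTER INEQUALITY -/
lemma master (V : Measure (E2 × Mat2)) [IsFiniteMeasure V]
    (hproj : ∀ᵐ p ∂V, IsProj1 p.2) (h : E2 → E2)
    (hint : Integrable h (VarWeight V))
    (hcurv : ∀ g : E2 → E2, C1c g →
      firstVariation V g = -∫ x, ⟪g x, h x⟫ ∂(VarWeight V))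
    {C : ℝ} (hC0 : 0 ≤ C) (hC : ∀ x, |deriv Real.smoothTransition x| ≤ C)
    (x₀ : E2) (hτ : 0 < τ) (hσ : 0 < σ) (hk : 1 ≤ k) (hR : 0 < R) (hτR : τ ≤ R) :
    ((1 + τ ^ (4*k) / σ ^ (4*k)) ^ 2)⁻¹ * ((VarWeight V) (ball x₀ τ)).toReal ≤
      σ * ∫ x, ‖h x‖ ∂(VarWeight V) +
        (2 * Real.sqrt 2 * σ * C / R) * (V Set.univ).toReal := by
  have hμfin : IsFiniteMeasure (VarWeight V) := by
    unfold VarWeight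
    exact Measure.isFiniteMeasure_map V Prod.fst
  set e := 2 * Real.sqrt 2 * σ * C / R with he
  have he0 : 0 ≤ e := by rw [he]; positivity
  set Lf : E2 → ℝ := fun x => Phiz σ k (‖x - x₀‖ ^ 2) * eta R (‖x - x₀‖ ^ 2) with hLf
  have hLfcont : Continuous Lf :=
    ((continuous_Phiz hσ).comp (((continuous_id.sub continuous_const).norm).pow 2)).mul
      (continuous_eta.comp (((continuous_id.sub continuous_const).norm).pow 2))
  have hLf0 : ∀ x, 0 ≤ Lf x := fun x => Phiz_eta_nonneg hσ
  have hLf1 : ∀ x, Lf x ≤ 1 := fun x => Phiz_eta_le_one hσ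
  -- pointwise a.e. bounds for Wker
  have hae : ∀ᵐ p ∂V, Lf p.1 - e ≤ Wker σ k R x₀ p := by
    filter_upwards [hproj] with p hp
    have htr : (∑ i : Fin 2, p.2 i i) = 1 := hp.2.2
    unfold Wker
    rw [htr, mul_one]
    exact pointwise_lower hσ hk hR hC0 hC (by positivity) (quadf_nonneg hp _) (quadf_le hp _)
  have hWbd : ∀ᵐ p ∂V, ‖Wker σ k R x₀ p‖ ≤ 2 + e := by
    filter_upwards [hproj] with p hp
    have htr : (∑ i : Fin 2, p.2 i i) = 1 := hp.2.2
    unfold Wker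
    rw [htr, mul_one, Real.norm_eq_abs]
    exact pointwise_abs hσ hk hR hC0 hC (by positivity) (quadf_nonneg hp _) (quadf_le hp _)
  have hWint : Integrable (Wker σ k R x₀) V :=
    Integrable.mono' (integrable_const (2 + e))
      (continuous_Wker hσ x₀).aestronglyMeasurable hWbd
  have hLfF_int : Integrable (fun p : E2 × Mat2 => Lf p.1) V := by
    apply Integrable.mono' (integrable_const 1)
      ((hLfcont.comp continuous_fst).aestronglyMeasurable)
    filter_upwards with p
    simp only [Function.comp_apply, Real.norm_eq_abs, abs_of_nonneg (hLf0 _)]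
    exact hLf1 _
  have hLf_int : Integrable Lf (VarWeight V) := by
    apply Integrable.mono' (integrable_const 1) hLfcont.aestronglyMeasurable
    filter_upwards with x
    simp only [Real.norm_eq_abs, abs_of_nonneg (hLf0 _)]
    exact hLf1 _
  -- ∫ Lf∘fst dV - e * V(univ) ≤ ∫ Wker dV
  have hstep1 : (∫ p, Lf p.1 ∂V) - e * (V Set.univ).toReal ≤ ∫ p, Wker σ k R x₀ p ∂V := by
    have hmono : ∫ p, (Lf p.1 - e) ∂V ≤ ∫ p, Wker σ k R x₀ p ∂V :=
      integral_mono_ae (hLfF_int.sub (integrable_const e)) hWint hae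
    rwa [integral_sub hLfF_int (integrable_const e), integral_const, smul_eq_mul,
      mul_comm] at hmono
  -- push forward
  have hstep2 : ∫ p, Lf p.1 ∂V = ∫ x, Lf x ∂(VarWeight V) := by
    unfold VarWeight
    exact (integral_map measurable_fst.aemeasurable hLfcont.aestronglyMeasurable).symm
  -- lower bound by the ball
  have hstep3 : ((1 + τ ^ (4*k) / σ ^ (4*k)) ^ 2)⁻¹ * ((VarWeight V) (ball x₀ τ)).toReal ≤
      ∫ x, Lf x ∂(VarWeight V) := by
    set c := ((1 + τ ^ (4*k) / σ ^ (4*k)) ^ 2)⁻¹ with hc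
    have hball : ∀ x ∈ ball x₀ τ, c ≤ Lf x := by
      intro x hx
      rw [mem_ball, dist_eq_norm] at hx
      have hq0 : (0:ℝ) ≤ ‖x - x₀‖ ^ 2 := by positivity
      have hqτ : ‖x - x₀‖ ^ 2 ≤ τ ^ 2 := by
        have := pow_le_pow_left₀ (norm_nonneg _) hx.le 2
        exact this
      have hqR : ‖x - x₀‖ ^ 2 ≤ R ^ 2 := hqτ.trans (pow_le_pow_left₀ hτ.le hτR 2)
      have h1 : eta R (‖x - x₀‖ ^ 2) = 1 := eta_one hR hqR
      have h2 := Phiz_ge (τ := τ) hσ hk hτ.le hq0 hqτ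
      show c ≤ Phiz σ k (‖x - x₀‖ ^ 2) * eta R (‖x - x₀‖ ^ 2)
      rw [h1, mul_one]
      exact h2
    calc c * ((VarWeight V) (ball x₀ τ)).toReal
        = ∫ _ in ball x₀ τ, c ∂(VarWeight V) := by
          rw [setIntegral_const, smul_eq_mul, mul_comm]; rfl
      _ ≤ ∫ x in ball x₀ τ, Lf x ∂(VarWeight V) := by
          apply setIntegral_mono_on (integrableOn_const measure_ball_lt_top.ne)
            (hLf_int.integrableOn) measurableSet_ball
          exact hball
      _ ≤ ∫ x, Lf x ∂(VarWeight V) :=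
          setIntegral_le_integral hLf_int (Filter.Eventually.of_forall hLf0)
  -- upper bound via the curvature
  have hstep4 : ∫ p, Wker σ k R x₀ p ∂V ≤ σ * ∫ x, ‖h x‖ ∂(VarWeight V) := by
    rw [← firstVariation_gfun V hσ hR.ne' x₀,
      hcurv (gfun σ k R x₀) (C1c_gfun hσ hR x₀)]
    have hbound : ∀ x, ‖⟪gfun σ k R x₀ x, h x⟫‖ ≤ σ * ‖h x‖ := by
      intro x
      calc ‖⟪gfun σ k R x₀ x, h x⟫‖ ≤ ‖gfun σ k R x₀ x‖ * ‖h x‖ := norm_inner_le_norm _ _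
        _ ≤ σ * ‖h x‖ := mul_le_mul_of_nonneg_right (norm_gfun_le hσ hk x₀ x) (norm_nonneg _)
    calc -∫ x, ⟪gfun σ k R x₀ x, h x⟫ ∂(VarWeight V)
        ≤ ‖∫ x, ⟪gfun σ k R x₀ x, h x⟫ ∂(VarWeight V)‖ := by
          rw [Real.norm_eq_abs]; exact neg_le_abs _
      _ ≤ ∫ x, ‖⟪gfun σ k R x₀ x, h x⟫‖ ∂(VarWeight V) := norm_integral_le_integral_norm _
      _ ≤ ∫ x, σ * ‖h x‖ ∂(VarWeight V) := by
          apply integral_mono_of_nonneg (Filter.Eventually.of_forall fun x => norm_nonneg _)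
            (hint.norm.const_mul σ)
          exact Filter.Eventually.of_forall hbound
      _ = σ * ∫ x, ‖h x‖ ∂(VarWeight V) := integral_const_mul σ _
  linarith [hstep1, hstep2 ▸ hstep1, hstep3, hstep4, hstep2]

/-- per-ball bound, after taking all limits -/
lemma ball_bound (V : Measure (E2 × Mat2)) [IsFiniteMeasure V]
    (hproj : ∀ᵐ p ∂V, IsProj1 p.2) (h : E2 → E2)
    (hint : Integrable h (VarWeight V))
    (hcurv : ∀ g : E2 → E2, C1c g →
      firstVariation V g = -∫ x, ⟪g x, h x⟫ ∂(VarWeight V))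
    (x₀ : E2) {τ : ℝ} (hτ : 0 < τ) :
    ((VarWeight V) (ball x₀ τ)).toReal ≤ τ * ∫ x, ‖h x‖ ∂(VarWeight V) := by
  obtain ⟨C, hC0, hC⟩ := exists_C0
  set I := ∫ x, ‖h x‖ ∂(VarWeight V) with hI
  have hI0 : 0 ≤ I := integral_nonneg fun x => norm_nonneg _
  set M := (V Set.univ).toReal with hM
  have hM0 : 0 ≤ M := ENNReal.toReal_nonneg
  set A := ((VarWeight V) (ball x₀ τ)).toReal with hA
  have hA0 : 0 ≤ A := ENNReal.toReal_nonneg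
  -- Step A+B : for every ε > 0, A ≤ τ(1+ε)I
  have hstepAB : ∀ ε : ℝ, 0 < ε → A ≤ τ * (1 + ε) * I := by
    intro ε hε
    set σ := τ * (1 + ε) with hσdef
    have hσ : 0 < σ := by rw [hσdef]; positivity
    -- Step A : for every k ≥ 1, c_k * A ≤ σ * I
    have hstepA : ∀ k : ℕ, 1 ≤ k →
        ((1 + (((1+ε)^4)⁻¹) ^ k) ^ 2)⁻¹ * A ≤ σ * I := by
      intro k hk
      have hβ : τ ^ (4*k) / σ ^ (4*k) = (((1+ε)^4)⁻¹) ^ k := by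
        rw [hσdef, mul_pow]
        have hτk : (0:ℝ) < τ ^ (4*k) := by positivity
        have h1 : ((1:ℝ)+ε) ^ (4*k) = ((1+ε)^4) ^ k := by
          rw [← pow_mul]
        rw [h1]
        rw [div_eq_iff (by positivity : τ ^ (4*k) * ((1+ε)^4) ^ k ≠ 0)]
        field_simp
        rw [← mul_pow, one_div, inv_mul_cancel₀ (by positivity), one_pow]
      apply le_of_forall_pos_le_add
      intro δ hδ
      set R := max τ (2 * Real.sqrt 2 * σ * C * M / δ + 1) with hR
      have hRτ : τ ≤ R := le_max_left _ _
      have hRpos : 0 < R := lt_of_lt_of_le hτ hRτ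
      have hmaster := master (τ := τ) (σ := σ) (R := R) (k := k) V hproj h hint hcurv
        hC0 hC x₀ hτ hσ hk hRpos hRτ
      rw [hβ] at hmaster
      have herr : 2 * Real.sqrt 2 * σ * C / R * M ≤ δ := by
        have hR2 : 2 * Real.sqrt 2 * σ * C * M / δ + 1 ≤ R := le_max_right _ _
        have hnum : (0:ℝ) ≤ 2 * Real.sqrt 2 * σ * C * M := by positivity
        rw [div_mul_eq_mul_div, div_le_iff₀ hRpos]
        calc 2 * Real.sqrt 2 * σ * C * M ≤ δ * (2 * Real.sqrt 2 * σ * C * M / δ + 1) := by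
              rw [mul_add, mul_one, mul_div_cancel₀ _ hδ.ne']
              linarith
          _ ≤ δ * R := by
              exact mul_le_mul_of_nonneg_left hR2 hδ.le
      calc ((1 + (((1+ε)^4)⁻¹) ^ k) ^ 2)⁻¹ * A
          ≤ σ * I + 2 * Real.sqrt 2 * σ * C / R * M := hmaster
        _ ≤ σ * I + δ := by linarith
    -- Step B : k → ∞
    have hr1 : ((1:ℝ)+ε)^4 > 1 := one_lt_pow₀ (by linarith) (by norm_num)
    have hrlt : (((1:ℝ)+ε)^4)⁻¹ < 1 := by
      rw [inv_lt_one_iff₀]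
      right; exact hr1
    have hr0 : (0:ℝ) ≤ (((1:ℝ)+ε)^4)⁻¹ := by positivity
    have htend : Tendsto (fun k : ℕ => ((1 + (((1+ε)^4)⁻¹) ^ k) ^ 2)⁻¹ * A)
        atTop (nhds A) := by
      have h1 : Tendsto (fun k : ℕ => ((((1:ℝ)+ε)^4)⁻¹) ^ k) atTop (nhds 0) :=
        tendsto_pow_atTop_nhds_zero_of_lt_one hr0 hrlt
      have h2 : Tendsto (fun k : ℕ => ((1 + (((1+ε)^4)⁻¹) ^ k) ^ 2)⁻¹)
          atTop (nhds 1) := by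
        have h3 : Tendsto (fun k : ℕ => (1 + ((((1:ℝ)+ε)^4)⁻¹) ^ k) ^ 2)
            atTop (nhds 1) := by
          have := ((tendsto_const_nhds (x := (1:ℝ)) (f := atTop (α := ℕ))).add h1).pow 2
          simpa using this
        have := h3.inv₀ (by norm_num)
        simpa using this
      have := h2.mul (tendsto_const_nhds (x := A))
      simpa using this
    apply le_of_tendsto htend
    filter_upwards [eventually_ge_atTop 1] with k hk
    exact hstepA k hk
  -- Step C : ε → 0
  apply le_of_forall_pos_le_add
  intro δ hδ
  have hε : (0:ℝ) < δ / (τ * I + 1) := by positivity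
  have := hstepAB _ hε
  calc A ≤ τ * (1 + δ / (τ * I + 1)) * I := this
    _ = τ * I + (τ * I) * (δ / (τ * I + 1)) := by ring
    _ ≤ τ * I + δ := by
        have h1 : (0:ℝ) < τ * I + 1 := by positivity
        have h2 : (τ * I) * (δ / (τ * I + 1)) ≤ δ := by
          rw [mul_div_assoc', div_le_iff₀ h1]
          nlinarith [mul_nonneg (mul_nonneg hτ.le hI0) hδ.le]
        linarith [h2]

/-- Cauchy–Schwarz -/
lemma cauchy_schwarz_L1 (μ : Measure E2) [IsFiniteMeasure μ] (h : E2 → E2)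
    (hint : Integrable h μ) (hL2 : Integrable (fun x => ‖h x‖ ^ 2) μ) :
    ∫ x, ‖h x‖ ∂μ ≤ Real.sqrt ((μ Set.univ).toReal) * Real.sqrt (∫ x, ‖h x‖ ^ 2 ∂μ) := by
  set M := (μ Set.univ).toReal with hM
  have hM0 : 0 ≤ M := ENNReal.toReal_nonneg
  set B := ∫ x, ‖h x‖ ^ 2 ∂μ with hB
  have hB0 : 0 ≤ B := integral_nonneg fun x => by positivity
  have key : ∀ t : ℝ, 0 < t → ∫ x, ‖h x‖ ∂μ ≤ (t * M + B / t) / 2 := by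
    intro t ht
    have hptwise : ∀ x, ‖h x‖ ≤ (t + ‖h x‖ ^ 2 / t) / 2 := by
      intro x
      have hcomb : t + ‖h x‖ ^ 2 / t = (t ^ 2 + ‖h x‖ ^ 2) / t := by
        field_simp
      rw [hcomb, div_div, le_div_iff₀ (by positivity : (0:ℝ) < t * 2)]
      nlinarith [sq_nonneg (t - ‖h x‖)]
    have hrint : Integrable (fun x => (t + ‖h x‖ ^ 2 / t) / 2) μ :=
      (((integrable_const t).add (hL2.div_const t)).div_const 2)
    calc ∫ x, ‖h x‖ ∂μ ≤ ∫ x, (t + ‖h x‖ ^ 2 / t) / 2 ∂μ :=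
          integral_mono hint.norm hrint hptwise
      _ = (t * M + B / t) / 2 := by
          rw [integral_div, integral_add (integrable_const t) (hL2.div_const t),
            integral_const, integral_div, smul_eq_mul, hM, hB, Measure.real]
          ring
  rcases eq_or_lt_of_le hM0 with hMz | hMpos
  · -- μ = 0
    have hμz : μ = 0 := by
      apply Measure.measure_univ_eq_zero.mp
      rcases (ENNReal.toReal_eq_zero_iff (μ Set.univ)).mp hMz.symm with hz | hz
      · exact hz
      · exact absurd hz (measure_lt_top μ _).ne
    have hLz : ∫ x, ‖h x‖ ∂μ = 0 := by simp [hμz]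
    rw [hLz]
    positivity
  rcases eq_or_lt_of_le hB0 with hBz | hBpos
  · -- B = 0 : ∫‖h‖ ≤ t M/2 for all t
    have h0 : ∫ x, ‖h x‖ ∂μ ≤ 0 := by
      apply le_of_forall_pos_le_add
      intro δ hδ
      have := key (2 * δ / M) (by positivity)
      rw [← hBz] at this
      calc ∫ x, ‖h x‖ ∂μ ≤ (2 * δ / M * M + 0 / (2 * δ / M)) / 2 := this
        _ = δ := by
            rw [zero_div, add_zero, div_mul_cancel₀ _ hMpos.ne']
            ring
        _ ≤ 0 + δ := by linarith
    have hpos : 0 ≤ ∫ x, ‖h x‖ ∂μ := integral_nonneg fun x => norm_nonneg _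
    have : ∫ x, ‖h x‖ ∂μ = 0 := le_antisymm h0 hpos
    rw [this]
    positivity
  · -- main case
    set t := Real.sqrt (B / M) with ht
    have htpos : 0 < t := Real.sqrt_pos.2 (by positivity)
    have hsB : Real.sqrt B ^ 2 = B := Real.sq_sqrt hB0
    have hsM : Real.sqrt M ^ 2 = M := Real.sq_sqrt hM0
    have hsMpos : 0 < Real.sqrt M := Real.sqrt_pos.2 hMpos
    have hsBpos : 0 < Real.sqrt B := Real.sqrt_pos.2 hBpos
    have htdef : t = Real.sqrt B / Real.sqrt M := by
      rw [ht, Real.sqrt_div hB0]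
    have e1 : (Real.sqrt B / Real.sqrt M) * M = Real.sqrt B * Real.sqrt M := by
      rw [div_mul_eq_mul_div, div_eq_iff hsMpos.ne']
      linear_combination (-Real.sqrt B) * hsM
    have e2 : B / (Real.sqrt B / Real.sqrt M) = Real.sqrt B * Real.sqrt M := by
      rw [div_div_eq_mul_div, div_eq_iff hsBpos.ne']
      linear_combination (-Real.sqrt M) * hsB
    calc ∫ x, ‖h x‖ ∂μ ≤ (t * M + B / t) / 2 := key t htpos
      _ = Real.sqrt M * Real.sqrt B := by
          rw [htdef, e1, e2]
          ring

end S1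

/-- for a 1-varifold on ℝ² with finite weight, bounded first variation
absolutely continuous w.r.t. the weight and generalized curvature `h`, the
density-ratio supremum is bounded by ‖V‖(ℝ²)^{1/2}·(∫|h|²d‖V‖)^{1/2}. -/
theorem statement1 (V : Measure (E2 × Mat2)) [IsFiniteMeasure V]
    (hproj : ∀ᵐ p ∂V, IsProj1 p.2)
    (h : E2 → E2)
    (hint : Integrable h (VarWeight V))
    (hL2 : Integrable (fun x => ‖h x‖ ^ 2) (VarWeight V))
    (hcurv : ∀ g : E2 → E2, C1c g →
      firstVariation V g = -∫ x, ⟪g x, h x⟫ ∂(VarWeight V)) :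
    Dsup (VarWeight V) ≤
      Real.sqrt ((VarWeight V Set.univ).toReal) *
        Real.sqrt (∫ x, ‖h x‖ ^ 2 ∂(VarWeight V)) ∧
      ∀ (x₀ : E2) (r : ℝ), 0 < r →
        ((VarWeight V) (ball x₀ r)).toReal / r ≤
          Real.sqrt ((VarWeight V Set.univ).toReal) *
            Real.sqrt (∫ x, ‖h x‖ ^ 2 ∂(VarWeight V)) := by
  haveI hfin : IsFiniteMeasure (VarWeight V) := by
    unfold VarWeight
    exact Measure.isFiniteMeasure_map V Prod.fst
  have hRHS0 : 0 ≤ Real.sqrt ((VarWeight V Set.univ).toReal) *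
      Real.sqrt (∫ x, ‖h x‖ ^ 2 ∂(VarWeight V)) :=
    mul_nonneg (Real.sqrt_nonneg _) (Real.sqrt_nonneg _)
  have hCS := S1.cauchy_schwarz_L1 (VarWeight V) h hint hL2
  have hpart2 : ∀ (x₀ : E2) (r : ℝ), 0 < r →
      ((VarWeight V) (ball x₀ r)).toReal / r ≤
        Real.sqrt ((VarWeight V Set.univ).toReal) *
          Real.sqrt (∫ x, ‖h x‖ ^ 2 ∂(VarWeight V)) := by
    intro x₀ r hr
    rw [div_le_iff₀ hr]
    calc ((VarWeight V) (ball x₀ r)).toReal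
        ≤ r * ∫ x, ‖h x‖ ∂(VarWeight V) :=
          S1.ball_bound V hproj h hint hcurv x₀ hr
      _ ≤ r * (Real.sqrt ((VarWeight V Set.univ).toReal) *
            Real.sqrt (∫ x, ‖h x‖ ^ 2 ∂(VarWeight V))) :=
          mul_le_mul_of_nonneg_left hCS hr.le
      _ = Real.sqrt ((VarWeight V Set.univ).toReal) *
            Real.sqrt (∫ x, ‖h x‖ ^ 2 ∂(VarWeight V)) * r := by ring
  refine ⟨Real.sSup_le ?_ hRHS0, hpart2⟩
  rintro q ⟨x, r, hr, rfl⟩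
  exact hpart2 x r hr
end
end

section
/- Let T > 0, let u ∈ C¹_c(ℝ²×[0,∞);ℝ²), and let {V_t}_{t∈[0,T]} be a generalized Brakke flow with forcing u. Then for every nonnegative φ ∈ C²_c(ℝ²) there exists a constant C₃ > 0, depending only on ‖φ‖_{C²}, sup_{t∈[0,T]} ‖u(·,t)‖_{L²(ℝ²)}, sup_{t∈[0,T]} ‖V_t‖(ℝ²) and the Meyers–Ziemer constant C_MZ, such that for all 0 ≤ t₁ < t₂ ≤ T: ‖V_{t₂}‖(φ) − ‖V_{t₁}‖(φ) ≤ C₃ · [ (t₂ − t₁) + (1/4)∫_{t₁}^{t₂} ∫_{ℝ²} |h(·,V_t)|² d‖V_t‖ dt + ∫_{t₁}^{t₂} ∫_{ℝ²} |∇u(x,t)|² dx dt ]. In particular, t ↦ ‖V_t‖(φ) − C₃(t + H(t) + U(t)) is non-increasing on [0,T], where H(t) := (1/4)∫₀^t ∫ |h(·,V_s)|² d‖V_s‖ ds and U(t) := ∫₀^t ∫ |∇u|² dx ds. -/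
open MeasureTheory Metric Filter
open scoped ENNReal RealInnerProductSpace BigOperators

noncomputable section

/-- `C` is a Meyers–Ziemer constant in dimension 2: for every Radon measure on ℝ²
with finite density-ratio supremum and every `φ ∈ C¹_c(ℝ²)`,
`∫ φ dμ ≤ C · 𝔇(μ) · ∫ |∇φ| dx`. -/
def IsMZConst (C : ℝ) : Prop :=
  ∀ μ : Measure E2, IsLocallyFiniteMeasure μ → BddAbove (ratioSet μ) →
    ∀ φ : E2 → ℝ, ContDiff ℝ 1 φ → HasCompactSupport φ →
      ∫ x, φ x ∂μ ≤ C * Dsup μ * ∫ x, ‖fderiv ℝ φ x‖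

/-- `Du` is the weak (distributional) derivative of `u`: integration by parts
against C¹_c test functions holds in every direction. -/
def HasWeakFDerivV (u : E2 → E2) (Du : E2 → (E2 →L[ℝ] E2)) : Prop :=
  AEStronglyMeasurable u volume ∧ AEStronglyMeasurable Du volume ∧
    ∀ φ : E2 → ℝ, ContDiff ℝ 1 φ → HasCompactSupport φ → ∀ v : E2,
      ∫ x, φ x • Du x v = -∫ x, fderiv ℝ φ x v • u x

/-- `u` belongs to the Sobolev space W^{1,2}(ℝ²;ℝ²), with weak derivative `Du`. -/
def MemW12 (u : E2 → E2) (Du : E2 → (E2 →L[ℝ] E2)) : Prop :=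
  MemLp u 2 volume ∧ MemLp (fun x => ‖Du x‖) 2 volume ∧ HasWeakFDerivV u Du

/-- A time-dependent map belongs to C¹_c(ℝ² × [0,∞)). -/
def C1cSpaceTime {α : Type*} [NormedAddCommGroup α] [NormedSpace ℝ α]
    (u : ℝ → E2 → α) : Prop :=
  ContDiff ℝ 1 (Function.uncurry u) ∧ HasCompactSupport (Function.uncurry u)

/-- `{V t}_{t∈[0,T]}` is a generalized Brakke flow with forcing `u`, with generalized
curvature `h t` and forcing-velocity field `w t` (in the paper, `w = u^⊥`):
(a) for a.e. `t`, `V t` has bounded first variation absolutely continuous with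
respect to its weight, represented by `h t`, with `∫₀ᵀ∫|h|²d‖V_t‖dt < ∞`;
(b) the masses are uniformly bounded on `[0,T]`;
(c) `|w| ≤ |u|` pointwise ‖V_t‖-a.e., and Brakke's inequality holds for every
nonnegative test function `φ ∈ C¹_c(ℝ²×[0,∞))`. -/
structure IsBrakkeFlow (T : ℝ) (u : ℝ → E2 → E2) (V : ℝ → Measure (E2 × Mat2))
    (h w : ℝ → E2 → E2) : Prop where
  varifold : ∀ t ∈ Set.Icc 0 T, ∀ᵐ p ∂(V t), IsProj1 p.2
  finite : ∀ t ∈ Set.Icc 0 T, IsFiniteMeasure (V t)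
  massBdd : ∃ M : ℝ, ∀ t ∈ Set.Icc 0 T, VarWeight (V t) Set.univ ≤ ENNReal.ofReal M
  curv : ∀ᵐ t ∂(volume.restrict (Set.Icc 0 T)),
    Integrable (h t) (VarWeight (V t)) ∧
    Integrable (fun x => ‖h t x‖ ^ 2) (VarWeight (V t)) ∧
    ∀ g : E2 → E2, C1c g →
      firstVariation (V t) g = -∫ x, ⟪g x, h t x⟫ ∂(VarWeight (V t))
  curvL2 : IntegrableOn (fun t => ∫ x, ‖h t x‖ ^ 2 ∂(VarWeight (V t))) (Set.Icc 0 T)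
  wBound : ∀ᵐ t ∂(volume.restrict (Set.Icc 0 T)),
    ∀ᵐ x ∂(VarWeight (V t)), ‖w t x‖ ≤ ‖u t x‖
  brakkeIneq : ∀ t₁ t₂ : ℝ, 0 ≤ t₁ → t₁ ≤ t₂ → t₂ ≤ T →
    ∀ φ : ℝ → E2 → ℝ, C1cSpaceTime φ → (∀ t x, 0 ≤ φ t x) →
      (∫ x, φ t₂ x ∂(VarWeight (V t₂))) - (∫ x, φ t₁ x ∂(VarWeight (V t₁))) ≤
        ∫ t in Set.Icc t₁ t₂,
          ((∫ x, deriv (fun s => φ s x) t ∂(VarWeight (V t))) +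
            ∫ x, ⟪gradient (φ t) x - φ t x • h t x, h t x + w t x⟫
              ∂(VarWeight (V t)))

section AuxStatement12

lemma aux_addIcc {f : ℝ → ℝ} {T t₁ t₂ : ℝ} (hf : IntegrableOn f (Set.Icc 0 T))
    (h0 : 0 ≤ t₁) (h12 : t₁ ≤ t₂) (h2T : t₂ ≤ T) :
    ∫ t in Set.Icc 0 t₂, f t = (∫ t in Set.Icc 0 t₁, f t) + ∫ t in Set.Icc t₁ t₂, f t := by
  have h1 : IntervalIntegrable f volume 0 t₁ :=
    (hf.mono_set (by rw [Set.uIcc_of_le h0]; exact Set.Icc_subset_Icc le_rfl (h12.trans h2T))).intervalIntegrable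
  have h2 : IntervalIntegrable f volume t₁ t₂ :=
    (hf.mono_set (by rw [Set.uIcc_of_le h12]; exact Set.Icc_subset_Icc h0 h2T)).intervalIntegrable
  rw [MeasureTheory.integral_Icc_eq_integral_Ioc, MeasureTheory.integral_Icc_eq_integral_Ioc,
    MeasureTheory.integral_Icc_eq_integral_Ioc,
    ← intervalIntegral.integral_of_le h0, ← intervalIntegral.integral_of_le h12,
    ← intervalIntegral.integral_of_le (h0.trans h12),
    ← intervalIntegral.integral_add_adjacent_intervals h1 h2]

lemma aux_slice (u : ℝ → E2 → E2) (hu : ContDiff ℝ 1 (Function.uncurry u)) (t : ℝ) (x : E2) :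
    fderiv ℝ (u t) x = (fderiv ℝ (Function.uncurry u) (t, x)).comp
      ((0 : E2 →L[ℝ] ℝ).prod (ContinuousLinearMap.id ℝ E2)) := by
  have h1 : HasFDerivAt (Function.uncurry u) (fderiv ℝ (Function.uncurry u) (t, x)) (t, x) :=
    (hu.differentiable one_ne_zero (t, x)).hasFDerivAt
  have h2 : HasFDerivAt (fun y : E2 => ((t : ℝ), y))
      ((0 : E2 →L[ℝ] ℝ).prod (ContinuousLinearMap.id ℝ E2)) x :=
    HasFDerivAt.prodMk (hasFDerivAt_const t x) (hasFDerivAt_id x)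
  exact (h1.comp x h2).fderiv

lemma aux_slice_norm (u : ℝ → E2 → E2) (hu : ContDiff ℝ 1 (Function.uncurry u)) (t : ℝ) (x : E2) :
    ‖fderiv ℝ (u t) x‖ ≤ ‖fderiv ℝ (Function.uncurry u) (t, x)‖ := by
  rw [aux_slice u hu t x]
  refine (ContinuousLinearMap.opNorm_comp_le _ _).trans ?_
  have hle : ‖(0 : E2 →L[ℝ] ℝ).prod (ContinuousLinearMap.id ℝ E2)‖ ≤ 1 := by
    refine ContinuousLinearMap.opNorm_le_bound _ zero_le_one (fun v => ?_)
    rw [one_mul]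
    apply le_of_eq
    show ‖(((0 : E2 →L[ℝ] ℝ) v : ℝ), v)‖ = ‖v‖
    simp [Prod.norm_def]
  nlinarith [norm_nonneg (fderiv ℝ (Function.uncurry u) (t, x)),
    ContinuousLinearMap.opNorm_nonneg ((0 : E2 →L[ℝ] ℝ).prod (ContinuousLinearMap.id ℝ E2))]

lemma aux_fint (u : ℝ → E2 → E2) (hu1 : ContDiff ℝ 1 (Function.uncurry u))
    (hu2 : HasCompactSupport (Function.uncurry u)) (T : ℝ) :
    IntegrableOn (fun t => ∫ x, ‖fderiv ℝ (u t) x‖ ^ 2) (Set.Icc 0 T) := by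
  obtain ⟨K, hK⟩ := (hu2.fderiv (𝕜 := ℝ)).exists_bound_of_continuous (hu1.continuous_fderiv one_ne_zero)
  have hK0 : 0 ≤ K := (norm_nonneg _).trans (hK (0, 0))
  set Kx : Set E2 := Prod.snd '' tsupport (Function.uncurry u) with hKx
  have hKxc : IsCompact Kx := (hu2.image continuous_snd)
  have hzero : ∀ t x, x ∉ Kx → ‖fderiv ℝ (u t) x‖ ^ 2 = 0 := by
    intro t x hx
    have h0 : fderiv ℝ (Function.uncurry u) (t, x) = 0 := by
      by_contra hne
      exact hx ⟨(t, x), support_fderiv_subset ℝ (Function.mem_support.2 hne), rfl⟩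
    rw [aux_slice u hu1 t x, h0, ContinuousLinearMap.zero_comp]
    simp
  have hbd : ∀ t x, ‖fderiv ℝ (u t) x‖ ≤ K := fun t x =>
    (aux_slice_norm u hu1 t x).trans (hK (t, x))
  have hfnn : ∀ t, 0 ≤ ∫ x, ‖fderiv ℝ (u t) x‖ ^ 2 := fun t =>
    integral_nonneg fun x => by positivity
  have hmeas : StronglyMeasurable (fun t => ∫ x, ‖fderiv ℝ (u t) x‖ ^ 2) := by
    have heq : (fun t => ∫ x, ‖fderiv ℝ (u t) x‖ ^ 2) =
        fun t => ∫ x, ‖(fderiv ℝ (Function.uncurry u) (t, x)).comp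
          ((0 : E2 →L[ℝ] ℝ).prod (ContinuousLinearMap.id ℝ E2))‖ ^ 2 := by
      funext t; congr 1; funext x; rw [aux_slice u hu1 t x]
    rw [heq]
    exact (((((hu1.continuous_fderiv one_ne_zero).clm_comp continuous_const).norm).pow 2).stronglyMeasurable).integral_prod_right'
  have hfb : ∀ t, ∫ x, ‖fderiv ℝ (u t) x‖ ^ 2 ≤ K ^ 2 * (volume Kx).toReal := by
    intro t
    rw [← MeasureTheory.setIntegral_eq_integral_of_forall_compl_eq_zero (hzero t)]
    refine (le_abs_self _).trans ?_
    rw [← Real.norm_eq_abs]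
    refine norm_setIntegral_le_of_norm_le_const hKxc.measure_lt_top
      (fun x _ => ?_)
    rw [Real.norm_eq_abs, abs_of_nonneg (by positivity)]
    exact pow_le_pow_left₀ (norm_nonneg _) (hbd t x) 2
  refine Integrable.mono' (g := fun _ => K ^ 2 * (volume Kx).toReal)
    (integrableOn_const measure_Icc_lt_top.ne) hmeas.aestronglyMeasurable ?_
  filter_upwards with t
  rw [Real.norm_eq_abs, abs_of_nonneg (hfnn t)]
  exact hfb t

end AuxStatement12

set_option maxHeartbeats 1000000

/-- almost-monotonicity of localized mass along a generalized Brakke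
flow with forcing `u ∈ C¹_c`: for every nonnegative `φ ∈ C²_c(ℝ²)` there is
`C₃ > 0` with
`‖V_{t₂}‖(φ) − ‖V_{t₁}‖(φ) ≤ C₃[(t₂−t₁) + ¼∫_{t₁}^{t₂}∫|h|²d‖V_t‖dt + ∫_{t₁}^{t₂}∫|∇u|²dxdt]`;
in particular `t ↦ ‖V_t‖(φ) − C₃(t + H(t) + U(t))` is non-increasing on `[0,T]`. -/
theorem statement12 (C : ℝ) (hC : 0 < C) (hMZ : IsMZConst C)
    (T : ℝ) (hT : 0 < T) (u : ℝ → E2 → E2) (hu : C1cSpaceTime u)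
    (V : ℝ → Measure (E2 × Mat2)) (h w : ℝ → E2 → E2)
    (hF : IsBrakkeFlow T u V h w)
    (φ : E2 → ℝ) (hφ : ContDiff ℝ 2 φ) (hφc : HasCompactSupport φ)
    (hφ0 : ∀ x, 0 ≤ φ x) :
    ∃ C₃ : ℝ, 0 < C₃ ∧
      (∀ t₁ t₂ : ℝ, 0 ≤ t₁ → t₁ < t₂ → t₂ ≤ T →
        (∫ x, φ x ∂(VarWeight (V t₂))) - (∫ x, φ x ∂(VarWeight (V t₁))) ≤
          C₃ * ((t₂ - t₁) +
            (1 / 4) * (∫ t in Set.Icc t₁ t₂, ∫ x, ‖h t x‖ ^ 2 ∂(VarWeight (V t))) +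
            ∫ t in Set.Icc t₁ t₂, ∫ x, ‖fderiv ℝ (u t) x‖ ^ 2)) ∧
      (∀ t₁ t₂ : ℝ, 0 ≤ t₁ → t₁ ≤ t₂ → t₂ ≤ T →
        (∫ x, φ x ∂(VarWeight (V t₂))) -
            C₃ * (t₂ +
              (1 / 4) * (∫ s in Set.Icc 0 t₂, ∫ x, ‖h s x‖ ^ 2 ∂(VarWeight (V s))) +
              ∫ s in Set.Icc 0 t₂, ∫ x, ‖fderiv ℝ (u s) x‖ ^ 2) ≤
          (∫ x, φ x ∂(VarWeight (V t₁))) -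
            C₃ * (t₁ +
              (1 / 4) * (∫ s in Set.Icc 0 t₁, ∫ x, ‖h s x‖ ^ 2 ∂(VarWeight (V s))) +
              ∫ s in Set.Icc 0 t₁, ∫ x, ‖fderiv ℝ (u s) x‖ ^ 2)) := by
  classical
  obtain ⟨Cphi, hCphi⟩ := hφc.exists_bound_of_continuous hφ.continuous
  have hCphi0 : 0 ≤ Cphi := (norm_nonneg _).trans (hCphi 0)
  have hgrad : ∀ x, ‖gradient φ x‖ = ‖fderiv ℝ φ x‖ := fun x => by
    unfold gradient; exact LinearIsometryEquiv.norm_map _ _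
  obtain ⟨Cg, hCg⟩ := (hφc.fderiv (𝕜 := ℝ)).exists_bound_of_continuous
    (hφ.continuous_fderiv two_ne_zero)
  have hCg0 : 0 ≤ Cg := (norm_nonneg _).trans (hCg 0)
  obtain ⟨Cu, hCu⟩ := hu.2.exists_bound_of_continuous hu.1.continuous
  have hCu' : ∀ t x, ‖u t x‖ ≤ Cu := fun t x => hCu (t, x)
  have hCu0 : 0 ≤ Cu := (norm_nonneg _).trans (hCu (0, 0))
  obtain ⟨M, hM⟩ := hF.massBdd
  set M' : ℝ := max M 0 with hM'def
  have hM'0 : 0 ≤ M' := le_max_right _ _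
  have hM' : ∀ t ∈ Set.Icc 0 T, (VarWeight (V t) Set.univ).toReal ≤ M' := by
    intro t ht
    have h2 : (VarWeight (V t) Set.univ).toReal ≤ (ENNReal.ofReal M).toReal :=
      ENNReal.toReal_mono ENNReal.ofReal_ne_top (hM t ht)
    rwa [ENNReal.toReal_ofReal'] at h2
  have hfinW : ∀ t ∈ Set.Icc 0 T, IsFiniteMeasure (VarWeight (V t)) := by
    intro t ht
    exact ⟨lt_of_le_of_lt (hM t ht) ENNReal.ofReal_lt_top⟩
  -- the time cutoff
  have hrIn : (0:ℝ) < T/2 + 1 := by linarith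
  have hltb : T/2 + 1 < T + 2 := by linarith
  set χb : ContDiffBump (T/2 : ℝ) := ⟨T/2 + 1, T + 2, hrIn, hltb⟩ with hχb
  have hχ1 : ∀ t ∈ Set.Icc (0:ℝ) T, ∀ s ∈ Metric.ball t 1, (χb s : ℝ) = 1 := by
    intro t ht s hs
    apply χb.one_of_mem_closedBall
    rw [Metric.mem_closedBall, Real.dist_eq]
    rw [Metric.mem_ball, Real.dist_eq] at hs
    have h2 : |t - T/2| ≤ T/2 := abs_le.2 ⟨by linarith [ht.1], by linarith [ht.2]⟩
    have h3 : |s - T/2| ≤ |s - t| + |t - T/2| := abs_sub_le s t (T/2)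
    have h4 : χb.rIn = T/2 + 1 := rfl
    rw [h4]; linarith
  have hχt : ∀ t ∈ Set.Icc (0:ℝ) T, (χb t : ℝ) = 1 := fun t ht =>
    hχ1 t ht t (Metric.mem_ball_self one_pos)
  have hC1ST : C1cSpaceTime (fun s (x : E2) => (χb s : ℝ) * φ x) := by
    constructor
    · exact (χb.contDiff.comp contDiff_fst).mul ((hφ.of_le one_le_two).comp contDiff_snd)
    · refine HasCompactSupport.intro (IsCompact.prod χb.hasCompactSupport hφc) ?_
      intro p hp
      show (χb p.1 : ℝ) * φ p.2 = 0
      rcases not_and_or.1 (by simpa [Set.mem_prod] using hp) with hh | hh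
      · rw [image_eq_zero_of_notMem_tsupport hh, zero_mul]
      · rw [image_eq_zero_of_notMem_tsupport hh, mul_zero]
  have hΦpos : ∀ t x, 0 ≤ (χb t : ℝ) * φ x := fun t x => mul_nonneg χb.nonneg (hφ0 x)
  -- constants
  set a : ℝ := Cg^2 + Cg*Cu + (Cphi*Cu)^2 with hadef
  have ha0 : 0 ≤ a := by
    have := mul_nonneg hCg0 hCu0
    have := sq_nonneg Cg
    have := sq_nonneg (Cphi*Cu)
    rw [hadef]; linarith
  set C₃ : ℝ := max (a * M') 2 + 1 with hC₃def
  have hC₃2 : 2 ≤ C₃ := by have := le_max_right (a*M') 2; linarith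
  have haM : a * M' ≤ C₃ := by have := le_max_left (a*M') 2; linarith
  have hC₃0 : 0 < C₃ := by linarith
  have hfint := aux_fint u hu.1 hu.2 T
  have hfnn : ∀ t, (0:ℝ) ≤ ∫ x, ‖fderiv ℝ (u t) x‖ ^ 2 := fun t =>
    integral_nonneg fun x => by positivity
  have part1 : ∀ t₁ t₂ : ℝ, 0 ≤ t₁ → t₁ < t₂ → t₂ ≤ T →
      (∫ x, φ x ∂(VarWeight (V t₂))) - (∫ x, φ x ∂(VarWeight (V t₁))) ≤
        C₃ * ((t₂ - t₁) +
          (1 / 4) * (∫ t in Set.Icc t₁ t₂, ∫ x, ‖h t x‖ ^ 2 ∂(VarWeight (V t))) +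
          ∫ t in Set.Icc t₁ t₂, ∫ x, ‖fderiv ℝ (u t) x‖ ^ 2) := by
    intro t₁ t₂ ht₁ h12 h2T
    have ht₁T : t₁ ∈ Set.Icc (0:ℝ) T := ⟨ht₁, h12.le.trans h2T⟩
    have ht₂T : t₂ ∈ Set.Icc (0:ℝ) T := ⟨ht₁.trans h12.le, h2T⟩
    have key := hF.brakkeIneq t₁ t₂ ht₁ h12.le h2T
      (fun s (x : E2) => (χb s : ℝ) * φ x) hC1ST hΦpos
    beta_reduce at key
    rw [hχt t₂ ht₂T, hχt t₁ ht₁T] at key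
    simp only [one_mul] at key
    refine key.trans ?_
    have hInn : (0:ℝ) ≤ ∫ t in Set.Icc t₁ t₂, ∫ x, ‖h t x‖ ^ 2 ∂(VarWeight (V t)) :=
      setIntegral_nonneg measurableSet_Icc fun t _ => integral_nonneg fun x => by positivity
    have hJnn : (0:ℝ) ≤ ∫ t in Set.Icc t₁ t₂, ∫ x, ‖fderiv ℝ (u t) x‖ ^ 2 :=
      setIntegral_nonneg measurableSet_Icc fun t _ => hfnn t
    have hhint : IntegrableOn (fun t => ∫ x, ‖h t x‖ ^ 2 ∂(VarWeight (V t))) (Set.Icc t₁ t₂) :=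
      hF.curvL2.mono_set (Set.Icc_subset_Icc ht₁ h2T)
    have hgint : IntegrableOn (fun t => a * M' + 2⁻¹ * ∫ x, ‖h t x‖ ^ 2 ∂(VarWeight (V t)))
        (Set.Icc t₁ t₂) :=
      (integrableOn_const measure_Icc_lt_top.ne).add (hhint.const_mul _)
    have hae : ∀ᵐ t ∂(volume.restrict (Set.Icc t₁ t₂)),
        ((∫ x, deriv (fun s => (χb s : ℝ) * φ x) t ∂(VarWeight (V t))) +
          ∫ x, ⟪gradient (fun y => (χb t : ℝ) * φ y) x - ((χb t : ℝ) * φ x) • h t x,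
            h t x + w t x⟫ ∂(VarWeight (V t))) ≤
          a * M' + 2⁻¹ * ∫ x, ‖h t x‖ ^ 2 ∂(VarWeight (V t)) := by
      have hmono : volume.restrict (Set.Icc t₁ t₂) ≤ volume.restrict (Set.Icc 0 T) :=
        Measure.restrict_mono (Set.Icc_subset_Icc ht₁ h2T) le_rfl
      filter_upwards [hF.curv.filter_mono (ae_mono hmono), hF.wBound.filter_mono (ae_mono hmono),
        ae_restrict_mem measurableSet_Icc] with t hcurv hw ht
      have htT : t ∈ Set.Icc (0:ℝ) T := ⟨ht₁.trans ht.1, ht.2.trans h2T⟩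
      have hA : (fun x : E2 => deriv (fun s => (χb s : ℝ) * φ x) t) = fun _ => (0:ℝ) := by
        funext x
        have hev : (fun s => (χb s : ℝ) * φ x) =ᶠ[nhds t] fun _ => φ x := by
          filter_upwards [Metric.ball_mem_nhds t one_pos] with s hs
          rw [hχ1 t htT s hs, one_mul]
        rw [hev.deriv_eq, deriv_const]
      rw [hA, integral_zero, zero_add, hχt t htT]
      simp only [one_mul]
      haveI hfin : IsFiniteMeasure (VarWeight (V t)) := hfinW t htT
      have hItnn : (0:ℝ) ≤ ∫ x, ‖h t x‖ ^ 2 ∂(VarWeight (V t)) :=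
        integral_nonneg fun x => by positivity
      by_cases hi : Integrable (fun x => ⟪gradient φ x - φ x • h t x, h t x + w t x⟫)
          (VarWeight (V t))
      case neg =>
        rw [integral_undef hi]
        have := mul_nonneg ha0 hM'0
        nlinarith
      case pos =>
        have hgi : Integrable (fun x => a + 2⁻¹ * ‖h t x‖ ^ 2) (VarWeight (V t)) :=
          (integrable_const a).add (hcurv.2.1.const_mul _)
        have hpt : ∀ᵐ x ∂(VarWeight (V t)),
            ⟪gradient φ x - φ x • h t x, h t x + w t x⟫ ≤ a + 2⁻¹ * ‖h t x‖ ^ 2 := by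
          filter_upwards [hw] with x hwx
          have hwb : ‖w t x‖ ≤ Cu := hwx.trans (hCu' t x)
          have e1 : ⟪gradient φ x, h t x⟫ ≤ Cg * ‖h t x‖ :=
            (real_inner_le_norm _ _).trans
              (mul_le_mul_of_nonneg_right (by rw [hgrad]; exact hCg x) (norm_nonneg _))
          have e2 : ⟪gradient φ x, w t x⟫ ≤ Cg * Cu :=
            (real_inner_le_norm _ _).trans
              (mul_le_mul (by rw [hgrad]; exact hCg x) hwb (norm_nonneg _) hCg0)
          have e3 : (0:ℝ) ≤ ⟪φ x • h t x, h t x⟫ := by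
            rw [real_inner_smul_left]
            exact mul_nonneg (hφ0 x) real_inner_self_nonneg
          have hφx : φ x ≤ Cphi := (le_abs_self _).trans (by
            have := hCphi x; rwa [Real.norm_eq_abs] at this)
          have e4 : -⟪φ x • h t x, w t x⟫ ≤ Cphi * Cu * ‖h t x‖ := by
            have h4a := abs_real_inner_le_norm (φ x • h t x) (w t x)
            have h4b : ‖φ x • h t x‖ = φ x * ‖h t x‖ := by
              rw [norm_smul, Real.norm_eq_abs, abs_of_nonneg (hφ0 x)]
            calc -⟪φ x • h t x, w t x⟫ ≤ |⟪φ x • h t x, w t x⟫| := neg_le_abs _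
              _ ≤ ‖φ x • h t x‖ * ‖w t x‖ := h4a
              _ = φ x * ‖h t x‖ * ‖w t x‖ := by rw [h4b]
              _ ≤ Cphi * ‖h t x‖ * Cu :=
                  mul_le_mul (mul_le_mul_of_nonneg_right hφx (norm_nonneg _)) hwb
                    (norm_nonneg _) (mul_nonneg hCphi0 (norm_nonneg _))
              _ = Cphi * Cu * ‖h t x‖ := by ring
          have expand : ⟪gradient φ x - φ x • h t x, h t x + w t x⟫ =
              ⟪gradient φ x, h t x⟫ + ⟪gradient φ x, w t x⟫ -
                ⟪φ x • h t x, h t x⟫ - ⟪φ x • h t x, w t x⟫ := by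
            rw [inner_sub_left, inner_add_right, inner_add_right]; ring
          have c1 : Cg * ‖h t x‖ ≤ Cg^2 + 4⁻¹ * ‖h t x‖^2 := by
            nlinarith [sq_nonneg (2*Cg - ‖h t x‖)]
          have c2 : Cphi * Cu * ‖h t x‖ ≤ (Cphi*Cu)^2 + 4⁻¹ * ‖h t x‖^2 := by
            nlinarith [sq_nonneg (2*(Cphi*Cu) - ‖h t x‖)]
          rw [expand, hadef]
          linarith [e1, e2, e3, e4, c1, c2]
        calc ∫ x, ⟪gradient φ x - φ x • h t x, h t x + w t x⟫ ∂(VarWeight (V t))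
            ≤ ∫ x, (a + 2⁻¹ * ‖h t x‖ ^ 2) ∂(VarWeight (V t)) := integral_mono_ae hi hgi hpt
          _ = a * (VarWeight (V t) Set.univ).toReal +
              2⁻¹ * ∫ x, ‖h t x‖ ^ 2 ∂(VarWeight (V t)) := by
              rw [integral_add (integrable_const a) (hcurv.2.1.const_mul _), integral_const, measureReal_def,
                integral_const_mul _ _, smul_eq_mul, mul_comm ((VarWeight (V t) Set.univ).toReal) a]
          _ ≤ a * M' + 2⁻¹ * ∫ x, ‖h t x‖ ^ 2 ∂(VarWeight (V t)) := by
              have := hM' t htT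
              nlinarith
    by_cases hABi : Integrable (fun t =>
        (∫ x, deriv (fun s => (χb s : ℝ) * φ x) t ∂(VarWeight (V t))) +
          ∫ x, ⟪gradient (fun y => (χb t : ℝ) * φ y) x - ((χb t : ℝ) * φ x) • h t x,
            h t x + w t x⟫ ∂(VarWeight (V t))) (volume.restrict (Set.Icc t₁ t₂))
    · refine (integral_mono_ae hABi hgint hae).trans ?_
      rw [integral_add (integrableOn_const (C := a * M') measure_Icc_lt_top.ne) (hhint.const_mul _),
        integral_const, integral_const_mul _ _, measureReal_def, Measure.restrict_apply_univ, Real.volume_Icc,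
        smul_eq_mul, ENNReal.toReal_ofReal (by linarith : (0:ℝ) ≤ t₂ - t₁)]
      clear_value a M' C₃
      linarith [mul_nonneg (sub_nonneg.2 haM) (by linarith : (0:ℝ) ≤ t₂ - t₁),
        mul_nonneg (by linarith : (0:ℝ) ≤ C₃ - 2) hInn, mul_nonneg hC₃0.le hJnn]
    · rw [integral_undef hABi]
      exact mul_nonneg hC₃0.le (by linarith)
  refine ⟨C₃, hC₃0, part1, ?_⟩
  intro t₁ t₂ ht₁ h12 h2T
  rcases eq_or_lt_of_le h12 with rfl | hlt
  · exact le_rfl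
  · have hmain := part1 t₁ t₂ ht₁ hlt h2T
    have hIadd := aux_addIcc (f := fun t => ∫ x, ‖h t x‖ ^ 2 ∂(VarWeight (V t)))
      hF.curvL2 ht₁ h12 h2T
    have hJadd := aux_addIcc (f := fun t => ∫ x, ‖fderiv ℝ (u t) x‖ ^ 2) hfint ht₁ h12 h2T
    have hexp : C₃ * (t₂ +
          (1/4) * (∫ s in Set.Icc 0 t₂, ∫ x, ‖h s x‖ ^ 2 ∂(VarWeight (V s))) +
          ∫ s in Set.Icc 0 t₂, ∫ x, ‖fderiv ℝ (u s) x‖ ^ 2) =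
        C₃ * (t₁ +
          (1/4) * (∫ s in Set.Icc 0 t₁, ∫ x, ‖h s x‖ ^ 2 ∂(VarWeight (V s))) +
          ∫ s in Set.Icc 0 t₁, ∫ x, ‖fderiv ℝ (u s) x‖ ^ 2) +
        C₃ * ((t₂ - t₁) +
          (1/4) * (∫ t in Set.Icc t₁ t₂, ∫ x, ‖h t x‖ ^ 2 ∂(VarWeight (V t))) +
          ∫ t in Set.Icc t₁ t₂, ∫ x, ‖fderiv ℝ (u t) x‖ ^ 2) := by
      rw [hIadd, hJadd]; ring
    linarith [hmain, hexp]
end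
end
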